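/- arXiv:1706.07267 — 3 statements merged into one kernel-verified Lean document; each statement's English description precedes it below -/
import Mathlib

section
/- If Γ is a bipartite (d+1)-colored graph of order 2p, then for every cyclic permutation ε of the colors, the quantity ρ_ε(Γ) := 1 − ½(Σ_{j∈ℤ_{d+1}} g_{ε_jε_{j+1}} + (1−d)p) is a non-negative integer. -/
open Relation

/-- An `n`-colored graph: a regular `n`-valent multigraph with a proper edge-coloring
by `Fin n`, encoded by one fixed-point-free "partner" involution per color. -/
structure CG (n : ℕ) where
  V : Type
  [finV : Fintype V]
  inv : Fin n → V → V
  invol : ∀ i v, inv i (inv i v) = v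
  noFix : ∀ i v, inv i v ≠ v

attribute [instance] CG.finV

namespace CG

variable {n : ℕ}

/-- `a` and `b` are joined by an edge whose color lies in `B`. -/
def step (G : CG n) (B : Set (Fin n)) (a b : G.V) : Prop := ∃ i ∈ B, G.inv i a = b

/-- `g_B`: the number of connected components of the subgraph spanned by the
edges with colors in `B`. -/
noncomputable def g (G : CG n) (B : Set (Fin n)) : ℕ :=
  Nat.card (Quotient (EqvGen.setoid (G.step B)))

def Connected (G : CG n) : Prop := ∀ a b : G.V, EqvGen (G.step Set.univ) a b

def Bipartite (G : CG n) : Prop := ∃ f : G.V → Bool, ∀ i v, f (G.inv i v) = ! f v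

/-- The `B`-residue containing `v` is bipartite. -/
def ResidueBipartite (G : CG n) (B : Set (Fin n)) (v : G.V) : Prop :=
  ∃ f : G.V → Bool, ∀ w, EqvGen (G.step B) v w → ∀ i ∈ B, f (G.inv i w) = ! f w

/-- Half the number of vertices, as a rational. -/
noncomputable def pQ (G : CG n) : ℚ := (Nat.card G.V : ℚ) / 2

/-- The regular genus of `G` with respect to the cyclic permutation `ε`:
`ρ_ε(Γ) = 1 - ½( Σ_j g_{ε_j ε_{j+1}} + (1-d)p )` where `n = d+1`. -/
noncomputable def rho [NeZero n] (G : CG n) (ε : ZMod n ≃ Fin n) : ℚ :=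
  1 - ((∑ j : ZMod n, (G.g {ε j, ε (j + 1)} : ℚ)) + (1 - ((n : ℚ) - 1)) * G.pQ) / 2

/-- The Gurau degree: the sum of `ρ_ε(Γ)` over all cyclic permutations of the colors
up to rotation and inversion; since `ρ_ε` is invariant under rotation and inversion of
`ε`, this is the sum over all `n!` labelings divided by `2n`. -/
noncomputable def omegaG [NeZero n] (G : CG n) : ℚ :=
  (∑ ε : ZMod n ≃ Fin n, G.rho ε) / (2 * n)

instance [NeZero n] : Nonempty (ZMod n ≃ Fin n) :=
  ⟨Fintype.equivOfCardEq (by simp [ZMod.card])⟩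

/-- The regular genus `ρ(Γ) = min_ε ρ_ε(Γ)`. -/
noncomputable def rhoMin [NeZero n] (G : CG n) : ℚ :=
  Finset.univ.inf' Finset.univ_nonempty (fun ε : ZMod n ≃ Fin n => G.rho ε)

/-- The residue (connected component) of the subgraph missing color `i` which
contains `v`, as an `n`-colored graph (colors renamed via `i.succAbove`). -/
noncomputable def hatRes (G : CG (n + 1)) (i : Fin (n + 1)) (v : G.V) : CG n where
  V := {w : G.V // EqvGen (G.step {j | j ≠ i}) v w}
  finV := Fintype.ofFinite _
  inv k w := ⟨G.inv (i.succAbove k) w.1,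
    (w.2.trans _ _ _ (EqvGen.rel _ _ ⟨i.succAbove k, Fin.succAbove_ne i k, rfl⟩))⟩
  invol := fun k w => Subtype.ext (G.invol _ _)
  noFix := fun k w h => G.noFix _ w.1 (congrArg Subtype.val h)

/-- `g_{î}`: the number of residues missing color `i`. -/
noncomputable def gHat (G : CG (n + 1)) (i : Fin (n + 1)) : ℕ := G.g {j | j ≠ i}

/-- `ω_G(Γ_{î})`: the sum of the Gurau degrees of the residues missing color `i`
(each component's degree is counted once: the contribution of each of its
vertices is divided by its cardinality). -/
noncomputable def omegaHat [NeZero n] (G : CG (n + 1)) (i : Fin (n + 1)) : ℚ :=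
  ∑ v : G.V, (G.hatRes i v).omegaG / (Nat.card (G.hatRes i v).V)

/-- `x`,`y` form a dipole of colors `C`: they are joined by edges of all colors in `C`
and lie in different components of the subgraph missing the colors of `C`. -/
def IsDipole (G : CG n) (C : Finset (Fin n)) (x y : G.V) : Prop :=
  (∀ c ∈ C, G.inv c x = y) ∧ ¬ EqvGen (G.step {j | j ∉ (C : Set (Fin n))}) x y

def HasDipole (G : CG n) (r : ℕ) : Prop :=
  ∃ C : Finset (Fin n), C.card = r ∧ ∃ x y, G.IsDipole C x y

/-- `G'` is obtained from `G` by eliminating the dipole `(C, x, y)`: the two vertices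
are deleted and the hanging edges are welded according to their colors. -/
def ElimDipole (G G' : CG n) (C : Finset (Fin n)) (x y : G.V) : Prop :=
  G.IsDipole C x y ∧ (∀ c ∉ C, G.inv c x ≠ y) ∧
  ∃ e : G'.V ≃ {v : G.V // v ≠ x ∧ v ≠ y},
    ∀ i w, (G.inv i (e w : G.V) = x → ((e (G'.inv i w)) : G.V) = G.inv i y) ∧
      (G.inv i (e w : G.V) = y → ((e (G'.inv i w)) : G.V) = G.inv i x) ∧
      (G.inv i (e w : G.V) ≠ x → G.inv i (e w : G.V) ≠ y →
        ((e (G'.inv i w)) : G.V) = G.inv i (e w : G.V))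

/-- Color-preserving isomorphism of colored graphs. -/
def Iso (G G' : CG n) : Prop :=
  ∃ e : G.V ≃ G'.V, ∀ i v, e (G.inv i v) = G'.inv i (e v)

/-- `G` is contracted (relative to a predicate recognizing the graphs that represent
the sphere): for every color `i` either `Γ_{î}` is connected or none of its
components represents a sphere. -/
def Contracted (G : CG (n + 1)) (IsSphereGraph : CG n → Prop) : Prop :=
  ∀ i : Fin (n + 1), G.gHat i = 1 ∨ ∀ v, ¬ IsSphereGraph (G.hatRes i v)

noncomputable def resSetoid (G : CG (n + 1)) (i : Fin (n + 1)) : Setoid G.V :=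
  EqvGen.setoid (G.step {j | j ≠ i})

/-- The number of singular residues missing color `i`. -/
noncomputable def singCount (G : CG (n + 1)) (IsSphereGraph : CG n → Prop)
    (i : Fin (n + 1)) : ℕ :=
  Nat.card {x : Quotient (G.resSetoid i) // ¬ IsSphereGraph (G.hatRes i x.out)}

/-- Color `i` is singular: some residue missing color `i` is not a sphere. -/
def SingColor (G : CG (n + 1)) (IsSphereGraph : CG n → Prop) (i : Fin (n + 1)) : Prop :=
  ∃ v, ¬ IsSphereGraph (G.hatRes i v)

end CG
section RhoAuxSection

set_option linter.unusedSectionVars false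
set_option maxHeartbeats 1600000

namespace RhoAux

variable {X : Type} [Fintype X] [DecidableEq X]

def orbRel (σ : Equiv.Perm X) : X → X → Prop := fun a b => σ a = b

noncomputable def cc (σ : Equiv.Perm X) : ℕ :=
  Nat.card (Quotient (EqvGen.setoid (orbRel σ)))

theorem eqvGen_iff_pow {σ : Equiv.Perm X} {a b : X} :
    EqvGen (orbRel σ) a b ↔ ∃ k : ℕ, (σ ^ k) a = b := by
  constructor
  · intro h
    induction h with
    | rel x y hxy => exact ⟨1, by simpa [orbRel] using hxy⟩
    | refl x => exact ⟨0, rfl⟩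
    | symm x y _ ih =>
        obtain ⟨k, hk⟩ := ih
        refine ⟨k * (orderOf σ - 1), ?_⟩
        subst hk
        have h1 : (σ ^ (k * (orderOf σ - 1))) ((σ ^ k) x) = (σ ^ (k * (orderOf σ - 1) + k)) x := by
          rw [pow_add]; rfl
        have ho : 1 ≤ orderOf σ := orderOf_pos σ
        have h2 : k * (orderOf σ - 1) + k = orderOf σ * k := by
          rw [← Nat.mul_succ]; rw [Nat.succ_eq_add_one, Nat.sub_add_cancel ho, mul_comm]
        rw [h1, h2, pow_mul, pow_orderOf_eq_one, one_pow, Equiv.Perm.one_apply]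
    | trans x y z _ _ ih1 ih2 =>
        obtain ⟨k, hk⟩ := ih1; obtain ⟨l, hl⟩ := ih2
        exact ⟨l + k, by rw [pow_add, Equiv.Perm.mul_apply, hk, hl]⟩
  · rintro ⟨k, rfl⟩
    induction k with
    | zero => exact EqvGen.refl a
    | succ n ih =>
        refine EqvGen.trans _ _ _ ih (EqvGen.rel _ _ ?_)
        show σ ((σ ^ n) a) = (σ ^ (n + 1)) a
        rw [pow_succ', Equiv.Perm.mul_apply]

def glue (F : X → X → Prop) (a b : X) : X → X → Prop :=
  fun x y => F x y ∨ (F x a ∧ F b y) ∨ (F x b ∧ F a y)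

theorem glue_equivalence {F : X → X → Prop} (hF : Equivalence F) (a b : X) :
    Equivalence (glue F a b) := by
  constructor
  · intro x; exact Or.inl (hF.refl x)
  · rintro x y (h | ⟨h1, h2⟩ | ⟨h1, h2⟩)
    · exact Or.inl (hF.symm h)
    · exact Or.inr (Or.inr ⟨hF.symm h2, hF.symm h1⟩)
    · exact Or.inr (Or.inl ⟨hF.symm h2, hF.symm h1⟩)
  · rintro x y z (h | ⟨h1, h2⟩ | ⟨h1, h2⟩) (g | ⟨g1, g2⟩ | ⟨g1, g2⟩)
    · exact Or.inl (hF.trans h g)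
    · exact Or.inr (Or.inl ⟨hF.trans h g1, g2⟩)
    · exact Or.inr (Or.inr ⟨hF.trans h g1, g2⟩)
    · exact Or.inr (Or.inl ⟨h1, hF.trans h2 g⟩)
    · exact Or.inl (hF.trans (hF.trans h1 (hF.symm (hF.trans h2 g1))) g2)
    · exact Or.inl (hF.trans h1 g2)
    · exact Or.inr (Or.inr ⟨h1, hF.trans h2 g⟩)
    · exact Or.inl (hF.trans h1 g2)
    · exact Or.inl (hF.trans (hF.trans h1 (hF.symm (hF.trans h2 g1))) g2)

theorem glue_le {F H : X → X → Prop} (hH : Equivalence H) (hFH : ∀ x y, F x y → H x y)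
    {a b : X} (hab : H a b) : ∀ x y, glue F a b x y → H x y := by
  rintro x y (h | ⟨h1, h2⟩ | ⟨h1, h2⟩)
  · exact hFH _ _ h
  · exact hH.trans (hH.trans (hFH _ _ h1) hab) (hFH _ _ h2)
  · exact hH.trans (hH.trans (hFH _ _ h1) (hH.symm hab)) (hFH _ _ h2)

noncomputable def glueSetoid (s : Setoid X) (a b : X) : Setoid X :=
  ⟨glue s.r a b, glue_equivalence s.iseqv a b⟩

noncomputable def qcard (s : Setoid X) : ℕ := Nat.card (Quotient s)

theorem qcard_le_qcard {s t : Setoid X} (h : ∀ x y, s.r x y → t.r x y) :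
    qcard t ≤ qcard s := by
  have hs : Function.Surjective
      (fun q : Quotient s => Quotient.lift (fun x => (Quotient.mk t x))
        (fun a b hab => Quotient.sound (h a b hab)) q) := by
    intro q
    refine Quotient.inductionOn q (fun x => ⟨Quotient.mk s x, rfl⟩)
  exact Nat.card_le_card_of_surjective _ hs

theorem qcard_le_glue_add_one (s : Setoid X) (a b : X) :
    qcard s ≤ qcard (glueSetoid s a b) + 1 := by
  classical
  have hinj : Function.Injective
      (fun q : Quotient s => Quotient.lift
        (fun x => if s.r x a then (none : Option (Quotient (glueSetoid s a b)))
          else some (Quotient.mk _ x))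
        (by
          intro u v huv
          by_cases hu : s.r u a
          · have hv : s.r v a := s.iseqv.trans (s.iseqv.symm huv) hu
            simp [hu, hv]
          · have hv : ¬ s.r v a := fun hv => hu (s.iseqv.trans huv hv)
            simp only [hu, hv, if_false]
            exact congrArg some (Quotient.sound (Or.inl huv))) q) := by
    intro q1 q2
    refine Quotient.inductionOn₂ q1 q2 (fun x y h => ?_)
    simp only [Quotient.lift_mk] at h
    by_cases hx : s.r x a <;> by_cases hy : s.r y a
    · exact Quotient.sound (s.iseqv.trans hx (s.iseqv.symm hy))
    · simp [hx, hy] at h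
    · simp [hx, hy] at h
    · simp only [hx, hy, if_false, Option.some.injEq] at h
      rcases Quotient.exact h with (h' | ⟨h1, h2⟩ | ⟨h1, h2⟩)
      · exact Quotient.sound h'
      · exact absurd h1 hx
      · exact absurd (s.iseqv.symm h2) hy
  have := Nat.card_le_card_of_injective _ hinj
  calc qcard s ≤ Nat.card (Option (Quotient (glueSetoid s a b))) := this
    _ = qcard (glueSetoid s a b) + 1 := Finite.card_option

theorem glue_qcard_add_one_le (s : Setoid X) {a b : X} (hab : ¬ s.r a b) :
    qcard (glueSetoid s a b) + 1 ≤ qcard s := by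
  classical
  let ψ : Quotient (glueSetoid s a b) → Quotient s :=
    Quotient.lift (fun x => if s.r x b then Quotient.mk s a else Quotient.mk s x)
      (by
        rintro u v (h | ⟨h1, h2⟩ | ⟨h1, h2⟩)
        · by_cases hu : s.r u b
          · have hv : s.r v b := s.iseqv.trans (s.iseqv.symm h) hu
            simp [hu, hv]
          · have hv : ¬ s.r v b := fun hv => hu (s.iseqv.trans h hv)
            simp only [hu, hv, if_false]
            exact Quotient.sound h
        · have hu : ¬ s.r u b := fun hu => hab (s.iseqv.trans (s.iseqv.symm h1) hu)
          have hv : s.r v b := s.iseqv.symm h2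
          simp only [hu, hv, if_true, if_false]
          exact Quotient.sound h1
        · have hu : s.r u b := h1
          have hv : ¬ s.r v b := fun hv => hab (s.iseqv.trans h2 hv)
          simp only [hu, hv, if_true, if_false]
          exact Quotient.sound h2)
  have hψb : ∀ q, ψ q ≠ Quotient.mk s b := by
    intro q
    refine Quotient.inductionOn q (fun x => ?_)
    by_cases hx : s.r x b
    · show (if s.r x b then Quotient.mk s a else Quotient.mk s x) ≠ _
      simp only [hx, if_true]
      intro h; exact hab (Quotient.exact h)
    · show (if s.r x b then Quotient.mk s a else Quotient.mk s x) ≠ _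
      simp only [hx, if_false]
      intro h; exact hx (Quotient.exact h)
  have hinj : Function.Injective (fun o : Option (Quotient (glueSetoid s a b)) =>
      Option.elim o (Quotient.mk s b) ψ) := by
    intro o1 o2 h
    match o1, o2 with
    | none, none => rfl
    | none, some q => exact absurd h.symm (hψb q)
    | some q, none => exact absurd h (hψb q)
    | some q1, some q2 =>
        refine congrArg some ?_
        revert h
        refine Quotient.inductionOn₂ q1 q2 (fun x y h => ?_)
        simp only [Option.elim, ψ, Quotient.lift_mk] at h
        by_cases hx : s.r x b <;> by_cases hy : s.r y b
        · exact Quotient.sound (Or.inl (s.iseqv.trans hx (s.iseqv.symm hy)))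
        · simp only [hx, hy, if_true, if_false] at h
          exact Quotient.sound (Or.inr (Or.inr ⟨hx, Quotient.exact h⟩))
        · simp only [hx, hy, if_true, if_false] at h
          exact Quotient.sound (Or.inr (Or.inl ⟨s.iseqv.symm (Quotient.exact h.symm),
            s.iseqv.symm hy⟩))
        · simp only [hx, hy, if_false] at h
          exact Quotient.sound (Or.inl (Quotient.exact h))
  have := Nat.card_le_card_of_injective _ hinj
  calc qcard (glueSetoid s a b) + 1
      = Nat.card (Option (Quotient (glueSetoid s a b))) := Finite.card_option.symm
    _ ≤ qcard s := this

theorem E_swap_le_glue (σ : Equiv.Perm X) (a b : X) :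
    ∀ x y, EqvGen (orbRel (Equiv.swap a b * σ)) x y → glue (EqvGen (orbRel σ)) a b x y := by
  have hg := glue_equivalence (Relation.EqvGen.is_equivalence (orbRel σ)) a b
  intro x y h
  induction h with
  | rel u v huv =>
      have hv : v = Equiv.swap a b (σ u) := by
        rw [← huv]; rfl
      by_cases h1 : σ u = a
      · rw [hv, h1, Equiv.swap_apply_left]
        exact Or.inr (Or.inl ⟨EqvGen.rel _ _ h1, EqvGen.refl b⟩)
      · by_cases h2 : σ u = b
        · rw [hv, h2, Equiv.swap_apply_right]
          exact Or.inr (Or.inr ⟨EqvGen.rel _ _ h2, EqvGen.refl a⟩)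
        · rw [hv, Equiv.swap_apply_of_ne_of_ne h1 h2]
          exact Or.inl (EqvGen.rel _ _ rfl)
  | refl u => exact hg.refl u
  | symm u v _ ih => exact hg.symm ih
  | trans u v w _ _ ih1 ih2 => exact hg.trans ih1 ih2

theorem swap_fixes_pow {σ : Equiv.Perm X} {a : X} (h : σ a = a) : ∀ k : ℕ, (σ ^ k) a = a := by
  intro k
  induction k with
  | zero => rfl
  | succ n ih => rw [pow_succ, Equiv.Perm.mul_apply, h, ih]

theorem key_swap {σ : Equiv.Perm X} {a b : X} (hne : a ≠ b)
    (h : ¬ EqvGen (orbRel σ) a b) : EqvGen (orbRel (Equiv.swap a b * σ)) a b := by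
  set σ' := Equiv.swap a b * σ with hσ'
  have hex : ∃ k, 0 < k ∧ (σ ^ k) a = a :=
    ⟨orderOf σ, orderOf_pos σ, by rw [pow_orderOf_eq_one, Equiv.Perm.one_apply]⟩
  set m := Nat.find hex with hm
  obtain ⟨hm0, hma⟩ := Nat.find_spec hex
  have claim : ∀ j, j < m → (σ' ^ j) a = (σ ^ j) a := by
    intro j
    induction j with
    | zero => intro _; rfl
    | succ n ih =>
        intro hlt
        have hn : n < m := Nat.lt_of_succ_lt hlt
        have h1 : (σ' ^ (n + 1)) a = σ' ((σ' ^ n) a) := by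
          rw [pow_succ', Equiv.Perm.mul_apply]
        have h3 : σ ((σ ^ n) a) = (σ ^ (n + 1)) a := by
          rw [pow_succ', Equiv.Perm.mul_apply]
        have hna : (σ ^ (n + 1)) a ≠ a := fun hc => Nat.find_min hex hlt ⟨Nat.succ_pos n, hc⟩
        have hnb : (σ ^ (n + 1)) a ≠ b := fun hc => h (eqvGen_iff_pow.2 ⟨n + 1, hc⟩)
        rw [h1, ih hn, hσ', Equiv.Perm.mul_apply, h3, Equiv.swap_apply_of_ne_of_ne hna hnb]
  have hfin : (σ' ^ m) a = b := by
    obtain ⟨m', hmm⟩ : ∃ m', m = m' + 1 := ⟨m - 1, (Nat.succ_pred_eq_of_pos hm0).symm⟩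
    have h1 : (σ' ^ (m' + 1)) a = σ' ((σ' ^ m') a) := by
      rw [pow_succ', Equiv.Perm.mul_apply]
    rw [hmm, h1, claim m' (by omega), hσ', Equiv.Perm.mul_apply]
    have h3 : σ ((σ ^ m') a) = (σ ^ (m' + 1)) a := by rw [pow_succ', Equiv.Perm.mul_apply]
    rw [h3, ← hmm, hm, hma, Equiv.swap_apply_left]
  exact eqvGen_iff_pow.2 ⟨m, hfin⟩

theorem E_le_swap {σ : Equiv.Perm X} {a b : X}
    (hab' : EqvGen (orbRel (Equiv.swap a b * σ)) a b) :
    ∀ x y, EqvGen (orbRel σ) x y → EqvGen (orbRel (Equiv.swap a b * σ)) x y := by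
  set σ' := Equiv.swap a b * σ with hσ'
  have hgen : ∀ x, EqvGen (orbRel σ') x (σ x) := by
    intro x
    have hx : σ x = Equiv.swap a b (σ' x) := by
      rw [hσ', Equiv.Perm.mul_apply, Equiv.swap_apply_self]
    by_cases h1 : σ' x = a
    · rw [hx, h1, Equiv.swap_apply_left]
      exact EqvGen.trans _ _ _ (EqvGen.rel _ _ h1) hab'
    · by_cases h2 : σ' x = b
      · rw [hx, h2, Equiv.swap_apply_right]
        exact EqvGen.trans _ _ _ (EqvGen.rel _ _ h2) (EqvGen.symm _ _ hab')
      · rw [hx, Equiv.swap_apply_of_ne_of_ne h1 h2]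
        exact EqvGen.rel _ _ rfl
  intro x y h
  induction h with
  | rel u v huv => rw [← huv]; exact hgen u
  | refl u => exact EqvGen.refl u
  | symm u v _ ih => exact EqvGen.symm _ _ ih
  | trans u v w _ _ ih1 ih2 => exact EqvGen.trans _ _ _ ih1 ih2

theorem cc_swap_le (σ : Equiv.Perm X) (a b : X) :
    cc (Equiv.swap a b * σ) ≤ cc σ + 1 := by
  set σ' := Equiv.swap a b * σ with hσ'
  have hswap : Equiv.swap a b * σ' = σ := by
    rw [hσ', ← mul_assoc, Equiv.swap_mul_self, one_mul]
  have h1 : ∀ x y, EqvGen (orbRel σ) x y → glue (EqvGen (orbRel σ')) a b x y := by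
    intro x y h
    exact E_swap_le_glue σ' a b x y (by rwa [hswap])
  have c2 := qcard_le_glue_add_one (EqvGen.setoid (orbRel σ')) a b
  have c1 : qcard (glueSetoid (EqvGen.setoid (orbRel σ')) a b)
      ≤ qcard (EqvGen.setoid (orbRel σ)) := qcard_le_qcard h1
  calc cc σ' = qcard (EqvGen.setoid (orbRel σ')) := rfl
    _ ≤ qcard (glueSetoid (EqvGen.setoid (orbRel σ')) a b) + 1 := c2
    _ ≤ qcard (EqvGen.setoid (orbRel σ)) + 1 := by omega
    _ = cc σ + 1 := rfl

theorem cc_swap_merge {σ : Equiv.Perm X} {a b : X} (hne : a ≠ b)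
    (h : ¬ EqvGen (orbRel σ) a b) : cc (Equiv.swap a b * σ) + 1 ≤ cc σ := by
  set σ' := Equiv.swap a b * σ with hσ'
  have hab' := key_swap hne h
  have hle : ∀ x y, glue (EqvGen (orbRel σ)) a b x y → EqvGen (orbRel σ') x y :=
    glue_le (Relation.EqvGen.is_equivalence _) (E_le_swap hab') hab'
  have c1 : qcard (EqvGen.setoid (orbRel σ'))
      ≤ qcard (glueSetoid (EqvGen.setoid (orbRel σ)) a b) := qcard_le_qcard hle
  have c3 := glue_qcard_add_one_le (EqvGen.setoid (orbRel σ)) (a := a) (b := b) h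
  calc cc σ' + 1 ≤ qcard (glueSetoid (EqvGen.setoid (orbRel σ)) a b) + 1 :=
        Nat.add_le_add_right c1 1
    _ ≤ qcard (EqvGen.setoid (orbRel σ)) := c3
    _ = cc σ := rfl

theorem qcard_of_eq {r : X → X → Prop} (h : ∀ x y, r x y → x = y) :
    Nat.card (Quotient (EqvGen.setoid r)) = Nat.card X := by
  have hiff : ∀ x y, EqvGen r x y → x = y := by
    intro x y hxy
    induction hxy with
    | rel u v huv => exact h u v huv
    | refl u => rfl
    | symm u v _ ih => exact ih.symm
    | trans u v w _ _ ih1 ih2 => exact ih1.trans ih2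
  refine Nat.card_congr ⟨Quotient.lift id (fun u v huv => hiff u v huv),
    fun x => Quotient.mk _ x, ?_, ?_⟩
  · intro q; exact Quotient.inductionOn q (fun x => rfl)
  · intro x; rfl

theorem cc_one : cc (1 : Equiv.Perm X) = Nat.card X :=
  qcard_of_eq (fun x y h => h)

theorem cc_le_card (σ : Equiv.Perm X) : cc σ ≤ Nat.card X :=
  Nat.card_le_card_of_surjective (Quotient.mk _)
    (fun q => Quotient.inductionOn q (fun x => ⟨x, rfl⟩))

def permOf (L : List (X × X)) : Equiv.Perm X :=
  (L.map fun e => Equiv.swap e.1 e.2).prod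

theorem permOf_cons (e : X × X) (L : List (X × X)) :
    permOf (e :: L) = Equiv.swap e.1 e.2 * permOf L := by
  simp [permOf]

theorem permOf_append (L1 L2 : List (X × X)) :
    permOf (L1 ++ L2) = permOf L1 * permOf L2 := by
  simp [permOf]

theorem permOf_flatten (Ls : List (List (X × X))) :
    permOf Ls.flatten = (Ls.map permOf).prod := by
  induction Ls with
  | nil => rfl
  | cons l ls ih => rw [List.flatten_cons, permOf_append, ih, List.map_cons, List.prod_cons]

theorem exists_decomp (σ : Equiv.Perm X) :
    ∃ L : List (X × X), (∀ e ∈ L, e.1 ≠ e.2) ∧ permOf L = σ ∧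
      L.length + cc σ = Nat.card X := by
  suffices H : ∀ n (σ : Equiv.Perm X), Nat.card X - cc σ = n →
      ∃ L : List (X × X), (∀ e ∈ L, e.1 ≠ e.2) ∧ permOf L = σ ∧
        L.length + cc σ = Nat.card X from H _ σ rfl
  intro n
  induction n using Nat.strong_induction_on with
  | _ n ih =>
    intro σ hσ
    by_cases h1 : σ = 1
    · subst h1
      exact ⟨[], by simp, rfl, by simp [cc_one]⟩
    · have : ∃ a, σ a ≠ a := by
        by_contra hc
        push_neg at hc
        exact h1 (Equiv.ext fun x => by rw [hc x, Equiv.Perm.one_apply])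
      obtain ⟨a, ha⟩ := this
      set b := σ a with hb
      have hne : a ≠ b := fun hc => ha hc.symm
      set σ'' := Equiv.swap a b * σ with hσ''
      have hfix : σ'' a = a := by
        rw [hσ'', Equiv.Perm.mul_apply, ← hb, Equiv.swap_apply_right]
      have hswap : Equiv.swap a b * σ'' = σ := by
        rw [hσ'', ← mul_assoc, Equiv.swap_mul_self, one_mul]
      have hnotE : ¬ EqvGen (orbRel σ'') a b := by
        intro hE
        obtain ⟨k, hk⟩ := eqvGen_iff_pow.1 hE
        rw [swap_fixes_pow hfix k] at hk
        exact hne hk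
      have h2 : cc σ + 1 ≤ cc σ'' := by
        have := cc_swap_merge hne hnotE (σ := σ'')
        rwa [hswap] at this
      have h3 : cc σ'' ≤ cc σ + 1 := cc_swap_le σ a b
      have hcc : cc σ'' = cc σ + 1 := le_antisymm h3 h2
      have hle2 : cc σ'' ≤ Nat.card X := cc_le_card σ''
      have hlt : Nat.card X - cc σ'' < n := by omega
      obtain ⟨L, hL1, hL2, hL3⟩ := ih _ hlt σ'' rfl
      refine ⟨(a, b) :: L, ?_, ?_, ?_⟩
      · rintro e he
        rcases List.mem_cons.1 he with rfl | he'
        · exact hne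
        · exact hL1 e he'
      · rw [permOf_cons, hL2, hswap]
      · simp only [List.length_cons]
        omega

def edgeRel (L : List (X × X)) : X → X → Prop := fun x y => (x, y) ∈ L ∨ (y, x) ∈ L

noncomputable def tc (L : List (X × X)) : ℕ :=
  Nat.card (Quotient (EqvGen.setoid (edgeRel L)))

theorem edgeRel_mono {L L' : List (X × X)} (h : ∀ e ∈ L, e ∈ L') :
    ∀ x y, EqvGen (edgeRel L) x y → EqvGen (edgeRel L') x y := by
  intro x y hxy
  refine Relation.EqvGen.mono ?_ x y hxy
  rintro u v (h1 | h1)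
  · exact Or.inl (h _ h1)
  · exact Or.inr (h _ h1)

theorem orb_le_edge (L : List (X × X)) :
    ∀ x y, EqvGen (orbRel (permOf L)) x y → EqvGen (edgeRel L) x y := by
  induction L with
  | nil =>
      intro x y h
      have : x = y := by
        induction h with
        | rel u v huv => rw [← huv]; simp [permOf]
        | refl u => rfl
        | symm u v _ ih => exact ih.symm
        | trans u v w _ _ ih1 ih2 => exact ih1.trans ih2
      rw [this]; exact EqvGen.refl y
  | cons e L ih =>
      intro x y h
      rw [permOf_cons] at h
      have hglue := E_swap_le_glue (permOf L) e.1 e.2 x y h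
      refine glue_le (Relation.EqvGen.is_equivalence _) ?_ ?_ x y hglue
      · intro u v huv
        exact edgeRel_mono (fun f hf => List.mem_cons_of_mem e hf) u v (ih u v huv)
      · exact EqvGen.rel _ _ (Or.inl (by exact List.mem_cons_self (a := e) (l := L)))

theorem tc_invariant (L : List (X × X)) :
    cc (permOf L) + Nat.card X ≤ 2 * tc L + L.length := by
  induction L with
  | nil =>
      have h1 : cc (permOf ([] : List (X × X))) = Nat.card X := cc_one
      have h2 : tc ([] : List (X × X)) = Nat.card X :=
        qcard_of_eq (by rintro x y (h | h) <;> simp at h)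
      rw [h1, h2]; omega
  | cons e L ih =>
      obtain ⟨a, b⟩ := e
      by_cases hab : EqvGen (edgeRel L) a b
      · have ht1 : ∀ x y, EqvGen (edgeRel ((a, b) :: L)) x y → EqvGen (edgeRel L) x y := by
          intro x y h
          induction h with
          | rel u v huv =>
              rcases huv with h1 | h1
              · rcases List.mem_cons.1 h1 with h2 | h2
                · rw [Prod.mk.injEq] at h2
                  obtain ⟨rfl, rfl⟩ := h2
                  exact hab
                · exact EqvGen.rel _ _ (Or.inl h2)
              · rcases List.mem_cons.1 h1 with h2 | h2
                · rw [Prod.mk.injEq] at h2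
                  obtain ⟨rfl, rfl⟩ := h2
                  exact EqvGen.symm _ _ hab
                · exact EqvGen.rel _ _ (Or.inr h2)
          | refl u => exact EqvGen.refl u
          | symm u v _ ih' => exact EqvGen.symm _ _ ih'
          | trans u v w _ _ ih1 ih2 => exact EqvGen.trans _ _ _ ih1 ih2
        have ht : tc ((a, b) :: L) = tc L := by
          refine le_antisymm ?_ ?_
          · exact qcard_le_qcard (edgeRel_mono (fun f hf => List.mem_cons_of_mem _ hf))
          · exact qcard_le_qcard ht1
        rw [permOf_cons]
        simp only [List.length_cons, ht]
        have := cc_swap_le (permOf L) a b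
        omega
      · have hne : a ≠ b := by rintro rfl; exact hab (EqvGen.refl a)
        have hnotE : ¬ EqvGen (orbRel (permOf L)) a b := fun h => hab (orb_le_edge L a b h)
        have hc := cc_swap_merge hne hnotE
        have hg1 : ∀ x y, EqvGen (edgeRel ((a, b) :: L)) x y →
            glue (EqvGen (edgeRel L)) a b x y := by
          have hgeq := glue_equivalence (Relation.EqvGen.is_equivalence (edgeRel L)) a b
          intro x y h
          induction h with
          | rel u v huv =>
              rcases huv with h1 | h1
              · rcases List.mem_cons.1 h1 with h2 | h2
                · rw [Prod.mk.injEq] at h2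
                  obtain ⟨rfl, rfl⟩ := h2
                  exact Or.inr (Or.inl ⟨EqvGen.refl u, EqvGen.refl v⟩)
                · exact Or.inl (EqvGen.rel _ _ (Or.inl h2))
              · rcases List.mem_cons.1 h1 with h2 | h2
                · rw [Prod.mk.injEq] at h2
                  obtain ⟨rfl, rfl⟩ := h2
                  exact Or.inr (Or.inr ⟨EqvGen.refl u, EqvGen.refl v⟩)
                · exact Or.inl (EqvGen.rel _ _ (Or.inr h2))
          | refl u => exact hgeq.refl u
          | symm u v _ ih' => exact hgeq.symm ih'
          | trans u v w _ _ ih1 ih2 => exact hgeq.trans ih1 ih2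
        have ht2 : tc L ≤ tc ((a, b) :: L) + 1 := by
          have c2 := qcard_le_glue_add_one (EqvGen.setoid (edgeRel L)) a b
          have c1 : qcard (glueSetoid (EqvGen.setoid (edgeRel L)) a b)
              ≤ qcard (EqvGen.setoid (edgeRel ((a, b) :: L))) := qcard_le_qcard hg1
          calc tc L ≤ qcard (glueSetoid (EqvGen.setoid (edgeRel L)) a b) + 1 := c2
            _ ≤ tc ((a, b) :: L) + 1 := Nat.add_le_add_right c1 1
        rw [permOf_cons]
        simp only [List.length_cons]
        omega

theorem even_length (L : List (X × X)) (h : ∀ e ∈ L, e.1 ≠ e.2) (h1 : permOf L = 1) :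
    Even L.length := by
  have hs : Equiv.Perm.sign (permOf L) = (-1 : ℤˣ) ^ L.length := by
    have := Equiv.Perm.sign_prod_list_swap (l := L.map fun e => Equiv.swap e.1 e.2)
      (by
        intro g hg
        obtain ⟨e, he, rfl⟩ := List.mem_map.1 hg
        exact ⟨e.1, e.2, h e he, rfl⟩)
    rwa [List.length_map] at this
  rw [h1] at hs
  simp only [map_one] at hs
  rcases Nat.even_or_odd L.length with he | ho
  · exact he
  · exfalso
    rw [Odd.neg_one_pow ho] at hs
    exact absurd hs.symm (by decide)

theorem list_range_sum {M : Type} [AddCommMonoid M] (F : ℕ → M) :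
    ∀ n : ℕ, ((List.range n).map F).sum = ∑ i ∈ Finset.range n, F i := by
  intro n
  induction n with
  | zero => simp
  | succ n ih =>
      rw [List.range_succ, List.map_append, List.sum_append, Finset.sum_range_succ, ih]
      simp

end RhoAux

end RhoAuxSection

/-- for a bipartite `(d+1)`-colored graph, `ρ_ε(Γ)` is a non-negative integer
for every cyclic permutation `ε` of the colors. -/
theorem rho_nonneg_integer_of_bipartite {d : ℕ} (G : CG (d + 1)) (hG : G.Connected)
    (p : ℕ) (hp : Nat.card G.V = 2 * p) (hbip : G.Bipartite)
    (ε : ZMod (d + 1) ≃ Fin (d + 1)) :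
    ∃ k : ℕ, G.rho ε = (k : ℚ) := by
  classical
  obtain ⟨f, hf⟩ := hbip
  rcases isEmpty_or_nonempty G.V with hE | hne
  · -- empty graph : ρ = 1
    refine ⟨1, ?_⟩
    have h0 : Nat.card G.V = 0 := Nat.card_of_isEmpty
    have hg : ∀ B : Set (Fin (d + 1)), G.g B = 0 := by
      intro B
      have : IsEmpty (Quotient (EqvGen.setoid (G.step B))) :=
        ⟨fun q => Quotient.inductionOn q (fun v => hE.elim v)⟩
      exact Nat.card_of_isEmpty
    simp [CG.rho, CG.pQ, hg, h0]
  · -- main case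
    haveI : DecidableEq G.V := Classical.decEq _
    haveI : DecidableEq {v : G.V // f v = true} := Classical.decEq _
    -- basic bool facts
    have hwhite : ∀ (c : Fin (d + 1)) (v : G.V), f v = true → f (G.inv c v) = false := by
      intro c v hv; rw [hf, hv]; rfl
    have hwb : ∀ (c : Fin (d + 1)) (v : G.V), f v = false → f (G.inv c v) = true := by
      intro c v hv; rw [hf, hv]; rfl
    have hblack : ∀ (c c' : Fin (d + 1)) (v : G.V), f v = true →
        f (G.inv c' (G.inv c v)) = true := by
      intro c c' v hv; exact hwb _ _ (hwhite _ _ hv)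
    -- the permutations π j on black vertices
    obtain ⟨π, hπ⟩ : ∃ π : ZMod (d + 1) → Equiv.Perm {v : G.V // f v = true},
        ∀ (j : ZMod (d + 1)) (x : {v : G.V // f v = true}),
          ((π j) x).1 = G.inv (ε (j + 1)) (G.inv (ε j) x.1) := by
      refine ⟨fun j =>
        { toFun := fun x => ⟨G.inv (ε (j + 1)) (G.inv (ε j) x.1), hblack _ _ _ x.2⟩
          invFun := fun x => ⟨G.inv (ε j) (G.inv (ε (j + 1)) x.1), hblack _ _ _ x.2⟩
          left_inv := fun x => Subtype.ext (by simp only [G.invol])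
          right_inv := fun x => Subtype.ext (by simp only [G.invol]) }, fun j x => rfl⟩
    -- counting: g = cc (π j)
    have hL1 : ∀ j : ZMod (d + 1), G.g {ε j, ε (j + 1)} = RhoAux.cc (π j) := by
      intro j
      obtain ⟨φ, hφt, hφf⟩ : ∃ φ : G.V → {v : G.V // f v = true},
          (∀ v, f v = true → (φ v).1 = v) ∧ (∀ v, f v = false → (φ v).1 = G.inv (ε j) v) := by
        refine ⟨fun v => if h : f v = true then ⟨v, h⟩ else ⟨G.inv (ε j) v,
          hwb _ _ (by revert h; cases f v <;> simp)⟩, ?_, ?_⟩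
        · intro v hv; simp [hv]
        · intro v hv; simp [hv]
      set sA := EqvGen.setoid (G.step {ε j, ε (j + 1)}) with hsA
      set sB := EqvGen.setoid (RhoAux.orbRel (π j)) with hsB
      have wdV : ∀ a b : G.V, G.step {ε j, ε (j + 1)} a b →
          Quotient.mk sB (φ a) = Quotient.mk sB (φ b) := by
        rintro a b ⟨c, hc, rfl⟩
        have hcc : c = ε j ∨ c = ε (j + 1) := by simpa using hc
        cases hfa : f a with
        | true =>
            rcases hcc with rfl | rfl
            · have hfb : f (G.inv (ε j) a) = false := hwhite _ _ hfa
              have : φ (G.inv (ε j) a) = φ a :=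
                Subtype.ext (by rw [hφf _ hfb, G.invol, hφt _ hfa])
              rw [this]
            · have hfb : f (G.inv (ε (j + 1)) a) = false := hwhite _ _ hfa
              refine (Quotient.sound (EqvGen.rel _ _ ?_)).symm
              show (π j) (φ (G.inv (ε (j + 1)) a)) = φ a
              refine Subtype.ext ?_
              rw [hπ, hφf _ hfb, G.invol, G.invol, hφt _ hfa]
        | false =>
            have hfb : f (G.inv c a) = true := hwb _ _ hfa
            rcases hcc with rfl | rfl
            · have : φ (G.inv (ε j) a) = φ a :=
                Subtype.ext (by rw [hφt _ hfb, hφf _ hfa])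
              rw [this]
            · refine Quotient.sound (EqvGen.rel _ _ ?_)
              show (π j) (φ a) = φ (G.inv (ε (j + 1)) a)
              refine Subtype.ext ?_
              rw [hπ, hφf _ hfa, G.invol, hφt _ hfb]
      have wdV' : ∀ a b : G.V, EqvGen (G.step {ε j, ε (j + 1)}) a b →
          Quotient.mk sB (φ a) = Quotient.mk sB (φ b) := by
        intro a b h
        induction h with
        | rel u v huv => exact wdV u v huv
        | refl u => rfl
        | symm u v _ ih => exact ih.symm
        | trans u v w _ _ ih1 ih2 => exact ih1.trans ih2
      have wdX' : ∀ x y : {v : G.V // f v = true}, EqvGen (RhoAux.orbRel (π j)) x y →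
          Quotient.mk sA x.1 = Quotient.mk sA y.1 := by
        intro x y h
        induction h with
        | rel u v huv =>
            refine Quotient.sound ?_
            have hv : v.1 = G.inv (ε (j + 1)) (G.inv (ε j) u.1) := by rw [← huv, hπ]
            rw [hv]
            exact EqvGen.trans _ _ _
              (EqvGen.rel _ _ ⟨ε j, Set.mem_insert _ _, rfl⟩)
              (EqvGen.rel _ _ ⟨ε (j + 1), Set.mem_insert_of_mem _ rfl, rfl⟩)
        | refl u => rfl
        | symm u v _ ih => exact ih.symm
        | trans u v w _ _ ih1 ih2 => exact ih1.trans ih2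
      refine Nat.card_congr ⟨Quotient.lift (fun v => Quotient.mk sB (φ v)) wdV',
        Quotient.lift (fun x : {v : G.V // f v = true} => Quotient.mk sA x.1) wdX', ?_, ?_⟩
      · intro q
        refine Quotient.inductionOn q (fun v => ?_)
        show Quotient.mk sA (φ v).1 = Quotient.mk sA v
        cases hfv : f v with
        | true => rw [hφt _ hfv]
        | false =>
            rw [hφf _ hfv]
            exact (Quotient.sound (EqvGen.rel _ _ ⟨ε j, Set.mem_insert _ _, rfl⟩)).symm
      · intro q
        refine Quotient.inductionOn q (fun x => ?_)
        show Quotient.mk sB (φ x.1) = Quotient.mk sB x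
        exact congrArg _ (Subtype.ext (hφt _ x.2))
    -- black vertex count
    have hpX : Nat.card {v : G.V // f v = true} = p := by
      have e2 : {v : G.V // ¬ f v = true} ≃ {v : G.V // f v = true} :=
        { toFun := fun w => ⟨G.inv (ε 0) w.1, hwb _ _ (by
            have h2 := w.2; revert h2; cases f w.1 <;> simp)⟩
          invFun := fun x => ⟨G.inv (ε 0) x.1, by rw [hwhite _ _ x.2]; simp⟩
          left_inv := fun w => Subtype.ext (G.invol _ _)
          right_inv := fun x => Subtype.ext (G.invol _ _) }
      have h1 : Nat.card G.V = Nat.card {v : G.V // f v = true}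
          + Nat.card {v : G.V // ¬ f v = true} := by
        rw [← Nat.card_sum]
        exact Nat.card_congr (Equiv.sumCompl _).symm
      rw [Nat.card_congr e2] at h1
      omega
    -- decompositions
    choose Ldec hLne hLperm hLlen using fun j : ZMod (d + 1) => RhoAux.exists_decomp (π j)
    set Lt := ((List.range (d + 1)).reverse.map
      (fun i => Ldec ((i : ℕ) : ZMod (d + 1)))).flatten with hLt
    -- telescoping product
    have hT : ∀ (m : ℕ) (x : {v : G.V // f v = true}),
        ((((List.range m).reverse.map (fun i => π ((i : ℕ) : ZMod (d + 1)))).prod) x).1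
          = G.inv (ε ((m : ℕ) : ZMod (d + 1))) (G.inv (ε 0) x.1) := by
      intro m
      induction m with
      | zero =>
          intro x
          simp only [List.range_zero, List.reverse_nil, List.map_nil, List.prod_nil,
            Nat.cast_zero]
          exact (G.invol _ _).symm
      | succ m ih =>
          intro x
          rw [List.range_succ, List.reverse_append, List.reverse_singleton,
            List.singleton_append, List.map_cons, List.prod_cons, Equiv.Perm.mul_apply, hπ,
            ih x, G.invol]
          have hcast : ((m + 1 : ℕ) : ZMod (d + 1)) = ((m : ℕ) : ZMod (d + 1)) + 1 := by
            push_cast; ring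
          rw [hcast]
    -- total product is 1
    have hperm_total : RhoAux.permOf Lt = 1 := by
      rw [hLt, RhoAux.permOf_flatten, List.map_map]
      have hmapeq : ((List.range (d + 1)).reverse.map
          (RhoAux.permOf ∘ fun i => Ldec ((i : ℕ) : ZMod (d + 1))))
          = (List.range (d + 1)).reverse.map (fun i => π ((i : ℕ) : ZMod (d + 1))) := by
        refine List.map_congr_left ?_
        intro i _
        exact hLperm _
      rw [hmapeq]
      refine Equiv.ext fun x => ?_
      refine Subtype.ext ?_
      rw [hT (d + 1) x]
      have h0 : (((d + 1 : ℕ)) : ZMod (d + 1)) = 0 := ZMod.natCast_self _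
      rw [h0, G.invol]
      rfl
    -- total length
    have hlen_total : Lt.length
        = ((List.range (d + 1)).map (fun i => (Ldec ((i : ℕ) : ZMod (d + 1))).length)).sum := by
      rw [hLt, List.length_flatten, List.map_map, List.map_reverse, List.sum_reverse]
      rfl
    -- all edges proper
    have hedges : ∀ e ∈ Lt, e.1 ≠ e.2 := by
      intro e he
      obtain ⟨l, hl, hel⟩ := List.mem_flatten.1 he
      obtain ⟨i, _, rfl⟩ := List.mem_map.1 hl
      exact hLne _ e hel
    -- connectivity pieces
    have hmem : ∀ (j : ZMod (d + 1)) e, e ∈ Ldec j → e ∈ Lt := by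
      intro j e he
      refine List.mem_flatten.2 ⟨Ldec j, ?_, he⟩
      refine List.mem_map.2 ⟨j.val, ?_, ?_⟩
      · exact List.mem_reverse.2 (List.mem_range.2 (ZMod.val_lt j))
      · exact congrArg Ldec (ZMod.natCast_rightInverse j)
    have hsub : ∀ (j : ZMod (d + 1)) (x y : {v : G.V // f v = true}),
        RhoAux.orbRel (π j) x y → EqvGen (RhoAux.edgeRel Lt) x y := by
      intro j x y h
      exact RhoAux.edgeRel_mono (hmem j) x y
        (RhoAux.orb_le_edge (Ldec j) x y (by rw [hLperm j]; exact EqvGen.rel _ _ h))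
    have hchain : ∀ (jc : ZMod (d + 1)) (m : ℕ) (x y : {v : G.V // f v = true}),
        y.1 = G.inv (ε (jc + (m : ℕ))) (G.inv (ε jc) x.1) →
          EqvGen (RhoAux.edgeRel Lt) x y := by
      intro jc m
      induction m with
      | zero =>
          intro x y hy
          have hxy : y = x := by
            refine Subtype.ext ?_
            rw [hy, Nat.cast_zero, add_zero, G.invol]
          rw [hxy]; exact EqvGen.refl x
      | succ m ih =>
          intro x y hy
          have hz : f (G.inv (ε (jc + (m : ℕ))) (G.inv (ε jc) x.1)) = true :=
            hblack _ _ _ x.2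
          have h1 : EqvGen (RhoAux.edgeRel Lt) x ⟨_, hz⟩ := ih x ⟨_, hz⟩ rfl
          have h2 : RhoAux.orbRel (π (jc + (m : ℕ))) ⟨_, hz⟩ y := by
            show (π (jc + (m : ℕ))) ⟨_, hz⟩ = y
            refine Subtype.ext ?_
            rw [hπ]
            show G.inv (ε (jc + (m : ℕ) + 1)) (G.inv (ε (jc + (m : ℕ)))
              (G.inv (ε (jc + (m : ℕ))) (G.inv (ε jc) x.1))) = y.1
            have hcast : jc + ((m + 1 : ℕ) : ZMod (d + 1)) = jc + (m : ℕ) + 1 := by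
              push_cast; ring
            rw [G.invol, hy, hcast]
          exact EqvGen.trans _ _ _ h1 (hsub _ _ _ h2)
    have hmove : ∀ (x y : {v : G.V // f v = true}) (c c' : Fin (d + 1)),
        y.1 = G.inv c' (G.inv c x.1) → EqvGen (RhoAux.edgeRel Lt) x y := by
      intro x y c c' hy
      have hj : ε (ε.symm c) = c := ε.apply_symm_apply c
      have hk : ε (ε.symm c') = c' := ε.apply_symm_apply c'
      refine hchain (ε.symm c) ((ε.symm c' - ε.symm c).val) x y ?_
      have hval : (ε.symm c) + (((ε.symm c' - ε.symm c).val : ℕ) : ZMod (d + 1)) = ε.symm c' := by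
        rw [ZMod.natCast_rightInverse (ε.symm c' - ε.symm c)]
        ring
      rw [hval, hj, hk]
      exact hy
    obtain ⟨φ0, hφ0t, hφ0f⟩ : ∃ φ0 : G.V → {v : G.V // f v = true},
        (∀ v, f v = true → (φ0 v).1 = v) ∧ (∀ v, f v = false → (φ0 v).1 = G.inv (ε 0) v) := by
      refine ⟨fun v => if h : f v = true then ⟨v, h⟩ else ⟨G.inv (ε 0) v,
        hwb _ _ (by revert h; cases f v <;> simp)⟩, ?_, ?_⟩
      · intro v hv; simp [hv]
      · intro v hv; simp [hv]
    have hcore : ∀ v w : G.V, G.step Set.univ v w →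
        EqvGen (RhoAux.edgeRel Lt) (φ0 v) (φ0 w) := by
      rintro v w ⟨c, _, rfl⟩
      cases hfv : f v with
      | true =>
          have hfw : f (G.inv c v) = false := hwhite _ _ hfv
          refine hmove (φ0 v) (φ0 (G.inv c v)) c (ε 0) ?_
          rw [hφ0f _ hfw, hφ0t _ hfv]
      | false =>
          have hfw : f (G.inv c v) = true := hwb _ _ hfv
          refine hmove (φ0 v) (φ0 (G.inv c v)) (ε 0) c ?_
          rw [hφ0f _ hfv, hφ0t _ hfw, G.invol]
    have hlift : ∀ v w : G.V, EqvGen (G.step Set.univ) v w →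
        EqvGen (RhoAux.edgeRel Lt) (φ0 v) (φ0 w) := by
      intro v w h
      induction h with
      | rel u v huv => exact hcore u v huv
      | refl u => exact EqvGen.refl _
      | symm u v _ ih => exact EqvGen.symm _ _ ih
      | trans u v w _ _ ih1 ih2 => exact EqvGen.trans _ _ _ ih1 ih2
    have hconn : ∀ x y : {v : G.V // f v = true}, EqvGen (RhoAux.edgeRel Lt) x y := by
      intro x y
      have h := hlift x.1 y.1 (hG x.1 y.1)
      have hx : φ0 x.1 = x := Subtype.ext (hφ0t _ x.2)
      have hy : φ0 y.1 = y := Subtype.ext (hφ0t _ y.2)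
      rwa [hx, hy] at h
    have htc : RhoAux.tc Lt = 1 := by
      refine Nat.card_eq_one_iff_unique.2 ⟨⟨fun q1 q2 => ?_⟩, ?_⟩
      · exact Quotient.inductionOn₂ q1 q2 (fun x y => Quotient.sound (hconn x y))
      · obtain ⟨v⟩ := hne
        cases hfv : f v with
        | true => exact ⟨Quotient.mk _ ⟨v, hfv⟩⟩
        | false => exact ⟨Quotient.mk _ ⟨G.inv (ε 0) v, hwb _ _ hfv⟩⟩
    -- invariant bound
    have hinv := RhoAux.tc_invariant Lt
    rw [hperm_total, RhoAux.cc_one, hpX, htc] at hinv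
    -- parity
    obtain ⟨m, hm⟩ := RhoAux.even_length Lt hedges hperm_total
    -- total sum identity
    have hNsum : Lt.length
        + ∑ i ∈ Finset.range (d + 1), RhoAux.cc (π ((i : ℕ) : ZMod (d + 1)))
        = (d + 1) * p := by
      rw [hlen_total, RhoAux.list_range_sum, ← Finset.sum_add_distrib]
      have hcongr : ∀ i ∈ Finset.range (d + 1),
          (Ldec ((i : ℕ) : ZMod (d + 1))).length + RhoAux.cc (π ((i : ℕ) : ZMod (d + 1)))
            = p := fun i _ => by rw [hLlen, hpX]
      rw [Finset.sum_congr rfl hcongr, Finset.sum_const, Finset.card_range, smul_eq_mul]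
    -- sum over ZMod vs range
    have hzsum : ∀ F : ZMod (d + 1) → ℚ, (∑ j : ZMod (d + 1), F j)
        = ∑ i ∈ Finset.range (d + 1), F ((i : ℕ) : ZMod (d + 1)) := by
      intro F
      rw [← Fin.sum_univ_eq_sum_range]
      refine (Fintype.sum_bijective (fun i : Fin (d + 1) => ((i : ℕ) : ZMod (d + 1))) ?_ _ _
        (fun i => rfl)).symm
      constructor
      · intro i1 i2 h
        have h2 := congrArg ZMod.val h
        rw [ZMod.val_cast_of_lt i1.isLt, ZMod.val_cast_of_lt i2.isLt] at h2
        exact Fin.ext h2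
      · intro j
        exact ⟨⟨j.val, ZMod.val_lt j⟩, ZMod.natCast_rightInverse j⟩
    -- sum of g's
    have hgs : (∑ j : ZMod (d + 1), (G.g {ε j, ε (j + 1)} : ℚ))
        = ((d : ℚ) + 1) * p - Lt.length := by
      have h1 : (∑ j : ZMod (d + 1), (G.g {ε j, ε (j + 1)} : ℚ))
          = ∑ i ∈ Finset.range (d + 1),
              ((RhoAux.cc (π ((i : ℕ) : ZMod (d + 1))) : ℕ) : ℚ) := by
        rw [hzsum (fun j => (G.g {ε j, ε (j + 1)} : ℚ))]
        exact Finset.sum_congr rfl (fun i _ => by rw [hL1])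
      rw [h1, ← Nat.cast_sum]
      have h4 := congrArg (fun n : ℕ => (n : ℚ)) hNsum
      push_cast at h4 ⊢
      linarith
    -- final arithmetic
    refine ⟨m + 1 - p, ?_⟩
    have hple : p ≤ m + 1 := by omega
    rw [CG.rho, CG.pQ, hgs, hp]
    have hk : ((m + 1 - p : ℕ) : ℚ) = (m : ℚ) + 1 - p := by
      push_cast [hple]; ring
    rw [hk]
    have hNq : (Lt.length : ℚ) = (m : ℚ) + m := by exact_mod_cast hm
    push_cast
    rw [hNq]
    ring
end

section
/- Let Γ be a (d+1)-colored graph and Γ′ the (d+1)-colored graph obtained from Γ by eliminating an r-dipole (1 ≤ r ≤ d). Then ω_G(Γ) = (d−1)!/2 · (r−1)(d−r) + ω_G(Γ′). In particular, eliminating an r-dipole never increases the Gurau degree, and eliminating a 1-dipole or a d-dipole leaves it unchanged. -/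
open Relation

section QuotLemmas

variable {A B : Type}

private lemma eqvGen_map {r : A → A → Prop} {t : B → B → Prop} (f : A → B)
    (hf : ∀ a b, r a b → EqvGen t (f a) (f b)) {a b : A} (h : EqvGen r a b) :
    EqvGen t (f a) (f b) := by
  induction h with
  | rel a b hab => exact hf _ _ hab
  | refl a => exact EqvGen.refl _
  | symm a b _ ih => exact EqvGen.symm _ _ ih
  | trans a b c _ _ ih1 ih2 => exact EqvGen.trans _ _ _ ih1 ih2

private lemma qsound {r : A → A → Prop} {a b : A} (h : EqvGen r a b) :
    Quotient.mk (EqvGen.setoid r) a = Quotient.mk (EqvGen.setoid r) b :=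
  Quotient.sound h

private lemma qexact {r : A → A → Prop} {a b : A}
    (h : Quotient.mk (EqvGen.setoid r) a = Quotient.mk (EqvGen.setoid r) b) :
    EqvGen r a b :=
  Quotient.exact h

private lemma card_subtype_ne {α : Type} [Finite α] (a : α) :
    Nat.card α = Nat.card {x : α // x ≠ a} + 1 := by
  classical
  cases nonempty_fintype α
  rw [Nat.card_eq_fintype_card, Nat.card_eq_fintype_card]
  have h1 : Fintype.card {x : α // x ≠ a} = Fintype.card α - 1 := by
    have := Fintype.card_subtype_compl (fun x : α => x = a)
    simpa [Fintype.card_subtype_eq] using this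
  have : 1 ≤ Fintype.card α := Fintype.card_pos_iff.mpr ⟨a⟩
  omega

private lemma card_quot_eq {r : A → A → Prop} {t : B → B → Prop} [Finite A] [Finite B]
    (f : A → B) (g : B → A)
    (hf : ∀ a b, r a b → EqvGen t (f a) (f b))
    (hg : ∀ a b, t a b → EqvGen r (g a) (g b))
    (hgf : ∀ a, EqvGen r (g (f a)) a)
    (hfg : ∀ b, EqvGen t (f (g b)) b) :
    Nat.card (Quotient (EqvGen.setoid r)) = Nat.card (Quotient (EqvGen.setoid t)) := by
  refine Nat.card_eq_of_bijective
    (Quotient.lift (fun a => (Quotient.mk (EqvGen.setoid t) (f a)))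
      (fun a b hab => qsound (eqvGen_map f hf hab))) ⟨?_, ?_⟩
  · rintro ⟨a⟩ ⟨b⟩ hab
    exact qsound
      ((hgf a).symm _ _ |>.trans _ _ _ ((eqvGen_map g hg (qexact hab)).trans _ _ _ (hgf b)))
  · rintro ⟨b⟩
    exact ⟨Quotient.mk _ (g b), qsound (hfg b)⟩

private lemma card_quot_succ {r : A → A → Prop} {t : B → B → Prop} [Finite A] [Finite B]
    (f : A → B) (g : B → A) (x : A)
    (hf : ∀ a b, r a b → EqvGen t (f a) (f b))
    (hg : ∀ a b, t a b → EqvGen r (g a) (g b))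
    (hfg : ∀ b, EqvGen t (f (g b)) b)
    (hgf : ∀ a, ¬ EqvGen r a x → EqvGen r (g (f a)) a)
    (hgx : ∀ b, ¬ EqvGen r (g b) x) :
    Nat.card (Quotient (EqvGen.setoid r)) = Nat.card (Quotient (EqvGen.setoid t)) + 1 := by
  classical
  rw [card_subtype_ne (Quotient.mk (EqvGen.setoid r) x)]
  congr 1
  symm
  refine Nat.card_eq_of_bijective (fun q => ⟨Quotient.lift
      (fun b => (Quotient.mk (EqvGen.setoid r) (g b)))
      (fun a b hab => qsound (eqvGen_map g hg hab)) q, ?_⟩) ⟨?_, ?_⟩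
  · induction q using Quotient.ind with
    | _ b => exact fun hc => hgx b (qexact hc)
  · rintro ⟨a⟩ ⟨b⟩ hab
    have h2 : EqvGen r (g a) (g b) := qexact (congrArg Subtype.val hab)
    exact qsound (((hfg a).symm _ _).trans _ _ _
      ((eqvGen_map f hf h2 |> fun h => ((hfg a).symm _ _)) |> fun _ =>
        (eqvGen_map f hf h2).trans _ _ _ (hfg b)))
  · rintro ⟨⟨a⟩, ha⟩
    have hax : ¬ EqvGen r a x := fun hc => ha (qsound hc)
    refine ⟨Quotient.mk _ (f a), ?_⟩
    exact Subtype.ext (qsound (hgf a hax))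

end QuotLemmas

section Walk
variable {A : Type} [Finite A]

private lemma walk_lemma (i1 i2 : A → A)
    (h1 : ∀ a, i1 (i1 a) = a) (h2 : ∀ a, i2 (i2 a) = a)
    (n1 : ∀ a, i1 a ≠ a) (n2 : ∀ a, i2 a ≠ a)
    (x : A) (S : A → Prop)
    (hS : ∀ v, S v → EqvGen (fun a b => i1 a = b ∨ i2 a = b) x v → v = x) :
    EqvGen (fun a b => (i1 a = b ∨ i2 a = b) ∧ ¬ S a ∧ ¬ S b) (i1 x) (i2 x) := by
  set R : A → A → Prop := fun a b => i1 a = b ∨ i2 a = b with hR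
  set R' : A → A → Prop := fun a b => (i1 a = b ∨ i2 a = b) ∧ ¬ S a ∧ ¬ S b with hR'
  set F : Equiv.Perm (A × Bool) :=
    ⟨fun p => (cond p.2 (i2 p.1) (i1 p.1), !p.2),
     fun p => (cond p.2 (i1 p.1) (i2 p.1), !p.2),
     by rintro ⟨a, (_|_)⟩ <;> simp [h1, h2],
     by rintro ⟨a, (_|_)⟩ <;> simp [h1, h2]⟩ with hF
  set L : Equiv.Perm (A × Bool) :=
    ⟨fun p => (p.1, !p.2), fun p => (p.1, !p.2), by rintro ⟨a, c⟩; simp, by rintro ⟨a, c⟩; simp⟩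
    with hL
  have hLL : L * L = 1 := by ext p <;> simp [hL]
  have hL2 : ∀ σ : Equiv.Perm (A × Bool), L * (L * σ) = σ := by
    intro σ; rw [← mul_assoc, hLL, one_mul]
  have hLFL : L * F * L = F⁻¹ := by
    ext p
    · rcases p with ⟨a, (_|_)⟩ <;>
        simp [hL, hF, Equiv.Perm.mul_apply, Equiv.Perm.inv_def]
    · rcases p with ⟨a, (_|_)⟩ <;>
        simp [hL, hF, Equiv.Perm.mul_apply, Equiv.Perm.inv_def]
  have hLF : ∀ m : ℕ, L * F ^ m * L = (F ^ m)⁻¹ := by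
    intro m
    induction m with
    | zero => simpa using hLL
    | succ m ih =>
      have hsplit : L * (F ^ m * F) * L = (L * F ^ m * L) * (L * F * L) := by
        simp only [mul_assoc]; rw [hL2]
      rw [pow_succ, hsplit, ih, hLFL]
      group
  set x₀ : A × Bool := (x, false) with hx₀
  have hstep : ∀ m : ℕ, L ((F ^ m) x₀) = (F ^ m)⁻¹ (L x₀) := by
    intro m
    have := congrFun (congrArg (fun (σ : Equiv.Perm (A × Bool)) => (σ : A × Bool → A × Bool))
      (hLF m)) (L x₀)
    have hLL' : ∀ p, L (L p) = p := fun p => by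
      rw [← Equiv.Perm.mul_apply, hLL, Equiv.Perm.one_apply]
    simpa [Equiv.Perm.mul_apply, hLL'] using this
  have noTT : ∀ j : ℕ, (F ^ j) x₀ ≠ (x, true) := by
    intro j hj
    have hLx₀ : L x₀ = (x, true) := by simp [hL, hx₀]
    rcases Nat.even_or_odd j with ⟨m, hm⟩ | ⟨m, hm⟩
    · have hjm : j = m + m := hm
      have h22 : F ^ j = F ^ m * F ^ m := by rw [hjm, pow_add]
      have : L ((F ^ m) x₀) = (F ^ m) x₀ := by
        rw [hstep m, hLx₀, ← hj, h22, Equiv.Perm.mul_apply, Equiv.Perm.inv_def, Equiv.symm_apply_apply]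
      have := congrArg Prod.snd this
      simp [hL] at this
    · have hjm : j = m + (m + 1) := by omega
      have h21 : F ^ j = F ^ m * F ^ (m + 1) := by rw [hjm, pow_add]
      have key : L ((F ^ m) x₀) = F ((F ^ m) x₀) := by
        rw [hstep m, hLx₀, ← hj, h21, Equiv.Perm.mul_apply, Equiv.Perm.inv_def, Equiv.symm_apply_apply,
          pow_succ', Equiv.Perm.mul_apply]
      rcases hp : (F ^ m) x₀ with ⟨a, c⟩
      rw [hp] at key
      have := congrArg Prod.fst key
      rcases c with _ | _
      · simp [hL, hF] at this; exact n1 a this.symm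
      · simp [hL, hF] at this; exact n2 a this.symm
  obtain ⟨n₀, hn₀pos, hn₀⟩ := (isOfFinOrder_of_finite F).exists_pow_eq_one
  have hex : ∃ k, 0 < k ∧ (F ^ k) x₀ = x₀ := ⟨n₀, hn₀pos, by rw [hn₀]; rfl⟩
  classical
  set N := Nat.find hex with hN
  obtain ⟨hNpos, hNfix⟩ : 0 < N ∧ (F ^ N) x₀ = x₀ := Nat.find_spec hex
  have hNmin : ∀ k, 0 < k → k < N → (F ^ k) x₀ ≠ x₀ := by
    intro k hk hkN hc
    exact Nat.find_min hex hkN ⟨hk, hc⟩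
  have hN1 : N ≠ 1 := by
    intro hc
    rw [hc, pow_one] at hNfix
    have := congrArg Prod.snd hNfix
    simp [hF, hx₀] at this
  have hN2 : 2 ≤ N := by omega
  have hne : ∀ k, 1 ≤ k → k ≤ N - 1 → ((F ^ k) x₀).1 ≠ x := by
    intro k hk1 hk2 hc
    rcases hp : (F ^ k) x₀ with ⟨a, c⟩
    rw [hp] at hc; subst hc
    rcases c with _ | _
    · exact hNmin k (by omega) (by omega) hp
    · exact noTT k hp
  have hconn : ∀ k, 1 ≤ k → EqvGen R x ((F ^ k) x₀).1 := by
    intro k hk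
    induction k with
    | zero => omega
    | succ k ih =>
      rcases Nat.eq_or_lt_of_le hk with h | h
      · have h1' : (F ^ 1) x₀ = (i1 x, true) := by simp [hF, hx₀]
        rw [← h, h1']
        exact EqvGen.rel _ _ (Or.inl rfl)
      · have hk' : 1 ≤ k := by omega
        have hedge : R ((F ^ k) x₀).1 ((F ^ (k+1)) x₀).1 := by
          rw [pow_succ', Equiv.Perm.mul_apply]
          rcases hp : (F ^ k) x₀ with ⟨a, (_|_)⟩ <;> simp [hF, hR]
        exact (ih hk').trans _ _ _ (EqvGen.rel _ _ hedge)
  have hSx : ∀ k, 1 ≤ k → k ≤ N - 1 → ¬ S (((F ^ k) x₀).1) := by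
    intro k hk1 hk2 hs
    exact hne k hk1 hk2 (hS _ hs (hconn k hk1))
  have chain : ∀ k, 1 ≤ k → k ≤ N - 1 → EqvGen R' (i1 x) ((F ^ k) x₀).1 := by
    intro k hk1
    induction k with
    | zero => omega
    | succ k ih =>
      intro hk2
      rcases Nat.eq_or_lt_of_le hk1 with h | h
      · have h1' : (F ^ 1) x₀ = (i1 x, true) := by simp [hF, hx₀]
        rw [← h, h1']
        exact EqvGen.refl _
      · have hk' : 1 ≤ k := by omega
        have hedge0 : i1 ((F ^ k) x₀).1 = ((F ^ (k+1)) x₀).1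
            ∨ i2 ((F ^ k) x₀).1 = ((F ^ (k+1)) x₀).1 := by
          rw [pow_succ', Equiv.Perm.mul_apply]
          rcases hp : (F ^ k) x₀ with ⟨a, (_|_)⟩ <;> simp [hF]
        have hedge : R' ((F ^ k) x₀).1 ((F ^ (k+1)) x₀).1 :=
          ⟨hedge0, hSx k hk' (by omega), hSx (k+1) (by omega) hk2⟩
        exact (ih hk' (by omega)).trans _ _ _ (EqvGen.rel _ _ hedge)
  have hlast : (F ^ (N - 1)) x₀ = (i2 x, true) := by
    apply F.injective
    have hNN : N - 1 + 1 = N := by omega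
    have h1 : F ((F ^ (N-1)) x₀) = (F ^ N) x₀ := by
      rw [← Equiv.Perm.mul_apply, ← pow_succ', hNN]
    rw [h1, hNfix]
    simp [hF, h2, hx₀]
  have := chain (N - 1) (by omega) le_rfl
  rw [hlast] at this
  exact this

end Walk


section Count
variable {α β : Type} [DecidableEq α] [DecidableEq β] [Fintype α] [Fintype β]

private def restrict2 (a b : α) (u v : β) (hab : a ≠ b) (huv : u ≠ v) :
    {ε : α ≃ β // ε a = u ∧ ε b = v} ≃
      ({x : α // x ≠ a ∧ x ≠ b} ≃ {y : β // y ≠ u ∧ y ≠ v}) where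
  toFun ε := Equiv.subtypeEquiv ε.1 (fun z => by
    constructor
    · rintro ⟨hx1, hx2⟩
      exact ⟨fun hc => hx1 (ε.1.injective (hc.trans ε.2.1.symm)),
        fun hc => hx2 (ε.1.injective (hc.trans ε.2.2.symm))⟩
    · rintro ⟨hx1, hx2⟩
      refine ⟨fun hc => hx1 ?_, fun hc => hx2 ?_⟩
      · rw [hc, ε.2.1]
      · rw [hc, ε.2.2])
  invFun φ := ⟨⟨fun z => if h1 : z = a then u else if h2 : z = b then v else (φ ⟨z, h1, h2⟩).1,
      fun w => if h1 : w = u then a else if h2 : w = v then b else (φ.symm ⟨w, h1, h2⟩).1,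
      fun z => by
        dsimp only
        by_cases h1 : z = a
        · subst h1; rw [dif_pos rfl, dif_pos rfl]
        · by_cases h2 : z = b
          · subst h2; rw [dif_neg h1, dif_pos rfl, dif_neg (Ne.symm huv), dif_pos rfl]
          · rw [dif_neg h1, dif_neg h2, dif_neg (φ ⟨z, h1, h2⟩).2.1,
              dif_neg (φ ⟨z, h1, h2⟩).2.2]
            exact congrArg Subtype.val (φ.symm_apply_apply ⟨z, h1, h2⟩),
      fun w => by
        dsimp only
        by_cases h1 : w = u
        · subst h1; rw [dif_pos rfl, dif_pos rfl]
        · by_cases h2 : w = v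
          · subst h2; rw [dif_neg h1, dif_pos rfl, dif_neg (Ne.symm hab), dif_pos rfl]
          · rw [dif_neg h1, dif_neg h2, dif_neg (φ.symm ⟨w, h1, h2⟩).2.1,
              dif_neg (φ.symm ⟨w, h1, h2⟩).2.2]
            exact congrArg Subtype.val (φ.apply_symm_apply ⟨w, h1, h2⟩)⟩,
    by simp, by simp [Ne.symm hab]⟩
  left_inv := by
    rintro ⟨ε, h1, h2⟩
    apply Subtype.ext
    apply Equiv.ext
    intro z
    show (if hz1 : z = a then u else if hz2 : z = b then v else _) = ε z
    by_cases hz1 : z = a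
    · subst hz1; rw [dif_pos rfl, h1]
    · by_cases hz2 : z = b
      · subst hz2; rw [dif_neg hz1, dif_pos rfl, h2]
      · rw [dif_neg hz1, dif_neg hz2]; rfl
  right_inv := by
    intro φ
    apply Equiv.ext
    rintro ⟨z, hz1, hz2⟩
    apply Subtype.ext
    show (if h1 : z = a then u else if h2 : z = b then v else (φ ⟨z, h1, h2⟩).1) = _
    rw [dif_neg hz1, dif_neg hz2]

private lemma card_ne2 (a b : α) (hab : a ≠ b) :
    Fintype.card {x : α // x ≠ a ∧ x ≠ b} = Fintype.card α - 2 := by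
  have h2 : Fintype.card {x : α // x = a ∨ x = b} = 2 := by
    rw [Fintype.card_subtype]
    have : Finset.univ.filter (fun x => x = a ∨ x = b) = {a, b} := by
      ext z; simp [Finset.mem_insert]
    rw [this, Finset.card_pair hab]
  have := Fintype.card_subtype_compl (fun x : α => x = a ∨ x = b)
  rw [h2] at this
  rw [← this]
  exact Fintype.card_congr (Equiv.subtypeEquivRight (fun z => by push_neg; tauto))

private lemma card_fix2 (a : α) (b : α) (u v : β) (hab : a ≠ b) (huv : u ≠ v)
    (hcard : Fintype.card α = Fintype.card β) :
    Fintype.card {ε : α ≃ β // ε a = u ∧ ε b = v} = (Fintype.card α - 2).factorial := by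
  rw [Fintype.card_congr (restrict2 a b u v hab huv)]
  have hc : Fintype.card {x : α // x ≠ a ∧ x ≠ b} = Fintype.card {y : β // y ≠ u ∧ y ≠ v} := by
    rw [card_ne2 a b hab, card_ne2 u v huv, hcard]
  rw [Fintype.card_equiv (Fintype.equivOfCardEq hc), card_ne2 a b hab]

private lemma sum_eval2 (χ : β → β → ℚ) (a b : α) (hab : a ≠ b)
    (hcard : Fintype.card α = Fintype.card β) :
    ∑ ε : α ≃ β, χ (ε a) (ε b)
      = ((Fintype.card α - 2).factorial : ℚ) *
        ∑ p : β × β, if p.1 ≠ p.2 then χ p.1 p.2 else 0 := by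
  classical
  rw [← Finset.sum_fiberwise' Finset.univ (fun ε : α ≃ β => ((ε a, ε b) : β × β))
    (fun p => χ p.1 p.2), Finset.mul_sum]
  refine Finset.sum_congr rfl fun p _ => ?_
  by_cases hp : p.1 ≠ p.2
  · rw [Finset.sum_const, if_pos hp]
    have hcardf : (Finset.univ.filter (fun ε : α ≃ β => (ε a, ε b) = p)).card
        = (Fintype.card α - 2).factorial := by
      rw [← Fintype.card_subtype, ← card_fix2 a b p.1 p.2 hab hp hcard]
      exact Fintype.card_congr (Equiv.subtypeEquivRight (fun ε => by
        simp [Prod.ext_iff]))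
    rw [hcardf, nsmul_eq_mul]
  · push_neg at hp
    have hempty : Finset.univ.filter (fun ε : α ≃ β => (ε a, ε b) = p) = ∅ := by
      rw [Finset.filter_eq_empty_iff]
      rintro ε _ hc
      rw [Prod.ext_iff] at hc
      have hc1 : ε a = p.1 := hc.1
      have hc2 : ε b = p.2 := hc.2
      exact hab (ε.injective (by rw [hc1, hc2, hp]))
    rw [hempty, if_neg (by simpa using hp)]
    simp

end Count

section Graph

variable {d : ℕ} (G G' : CG (d + 1)) (C : Finset (Fin (d + 1))) (x y : G.V)
  (e : G'.V ≃ {v : G.V // v ≠ x ∧ v ≠ y})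

private lemma direct_edge
    (he : ∀ i w, (G.inv i (e w : G.V) = x → ((e (G'.inv i w)) : G.V) = G.inv i y) ∧
      (G.inv i (e w : G.V) = y → ((e (G'.inv i w)) : G.V) = G.inv i x) ∧
      (G.inv i (e w : G.V) ≠ x → G.inv i (e w : G.V) ≠ y →
        ((e (G'.inv i w)) : G.V) = G.inv i (e w : G.V)))
    (i : Fin (d + 1)) (v v' : G.V) (hv : v ≠ x ∧ v ≠ y) (hv' : v' ≠ x ∧ v' ≠ y)
    (hiv : G.inv i v = v') :
    G'.inv i (e.symm ⟨v, hv⟩) = e.symm ⟨v', hv'⟩ := by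
  apply e.injective
  apply Subtype.ext
  rw [Equiv.apply_symm_apply]
  have h3 := (he i (e.symm ⟨v, hv⟩)).2.2
  simp only [Equiv.apply_symm_apply] at h3
  rw [hiv] at h3
  exact h3 hv'.1 hv'.2

private lemma weld_edge
    (he : ∀ i w, (G.inv i (e w : G.V) = x → ((e (G'.inv i w)) : G.V) = G.inv i y) ∧
      (G.inv i (e w : G.V) = y → ((e (G'.inv i w)) : G.V) = G.inv i x) ∧
      (G.inv i (e w : G.V) ≠ x → G.inv i (e w : G.V) ≠ y →
        ((e (G'.inv i w)) : G.V) = G.inv i (e w : G.V)))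
    (i : Fin (d + 1)) (hix : G.inv i x ≠ x ∧ G.inv i x ≠ y)
    (hiy : G.inv i y ≠ x ∧ G.inv i y ≠ y) :
    G'.inv i (e.symm ⟨G.inv i x, hix⟩) = e.symm ⟨G.inv i y, hiy⟩ := by
  apply e.injective
  apply Subtype.ext
  rw [Equiv.apply_symm_apply]
  have h1 := (he i (e.symm ⟨G.inv i x, hix⟩)).1
  simp only [Equiv.apply_symm_apply] at h1
  exact h1 (G.invol i x)

private lemma tau_eta (w : G'.V) : e.symm ⟨(e w : G.V), (e w).2⟩ = w := by
  rw [Subtype.coe_eta]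
  exact e.symm_apply_apply w

private lemma gA (hCxy : ∀ c ∈ C, G.inv c x = y) (w₀ : G'.V)
    (he : ∀ i w, (G.inv i (e w : G.V) = x → ((e (G'.inv i w)) : G.V) = G.inv i y) ∧
      (G.inv i (e w : G.V) = y → ((e (G'.inv i w)) : G.V) = G.inv i x) ∧
      (G.inv i (e w : G.V) ≠ x → G.inv i (e w : G.V) ≠ y →
        ((e (G'.inv i w)) : G.V) = G.inv i (e w : G.V)))
    (b1 b2 : Fin (d + 1)) (hb1 : b1 ∈ C) (hb2 : b2 ∈ C) :
    G.g {b1, b2} = G'.g {b1, b2} + 1 := by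
  classical
  have hyx : ∀ c ∈ C, G.inv c y = x := by
    intro c hc
    rw [← hCxy c hc]
    exact G.invol c x
  have hxy : x ≠ y := fun hh => G.noFix b1 x (by rw [hCxy b1 hb1, ← hh])
  have hmem : ∀ i ∈ ({b1, b2} : Set (Fin (d + 1))), i ∈ C := by
    rintro i (rfl | rfl)
    · exact hb1
    · exact hb2
  -- closure of {x, y} under the step relation
  have closure : ∀ a b, EqvGen (G.step {b1, b2}) a b → ((a = x ∨ a = y) ↔ (b = x ∨ b = y)) := by
    intro a b hab
    induction hab with
    | rel a b hab =>
      obtain ⟨i, hi, rfl⟩ := hab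
      have hiC := hmem i hi
      constructor
      · rintro (rfl | rfl)
        · exact Or.inr (hCxy i hiC)
        · exact Or.inl (hyx i hiC)
      · rintro (hbx | hby)
        · right; rw [← G.invol i a, hbx, hCxy i hiC]
        · left; rw [← G.invol i a, hby, hyx i hiC]
    | refl a => exact Iff.rfl
    | symm a b _ ih => exact ih.symm
    | trans a b c _ _ ih1 ih2 => exact ih1.trans ih2
  have hy_eqv : EqvGen (G.step {b1, b2}) y x :=
    EqvGen.rel _ _ ⟨b1, Or.inl rfl, hyx b1 hb1⟩
  refine card_quot_succ
    (fun v => if h : v ≠ x ∧ v ≠ y then (e.symm ⟨v, h⟩ : G'.V) else w₀)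
    (fun w => ((e w : {v : G.V // v ≠ x ∧ v ≠ y}) : G.V)) x ?_ ?_ ?_ ?_ ?_
  · -- hf
    rintro a b ⟨i, hi, rfl⟩
    have hiC := hmem i hi
    by_cases ha : a = x ∨ a = y
    · have hb : G.inv i a = x ∨ G.inv i a = y := by
        rcases ha with rfl | rfl
        · exact Or.inr (hCxy i hiC)
        · exact Or.inl (hyx i hiC)
      rw [dif_neg (by tauto), dif_neg (by tauto)]
      exact EqvGen.refl _
    · push_neg at ha
      have hb : G.inv i a ≠ x ∧ G.inv i a ≠ y := by
        constructor
        · intro hc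
          exact ha.2 (by rw [← G.invol i a, hc, hCxy i hiC])
        · intro hc
          exact ha.1 (by rw [← G.invol i a, hc, hyx i hiC])
      rw [dif_pos ha, dif_pos hb]
      exact EqvGen.rel _ _ ⟨i, hi, direct_edge G G' x y e he i a _ ha hb rfl⟩
  · -- hg
    rintro w w' ⟨i, hi, rfl⟩
    have hiC := hmem i hi
    have hwx : G.inv i (e w : G.V) ≠ x := by
      intro hc
      exact (e w).2.2 (by rw [← G.invol i (e w : G.V), hc, hCxy i hiC])
    have hwy : G.inv i (e w : G.V) ≠ y := by
      intro hc
      exact (e w).2.1 (by rw [← G.invol i (e w : G.V), hc, hyx i hiC])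
    exact EqvGen.rel _ _ ⟨i, hi, ((he i w).2.2 hwx hwy).symm⟩
  · -- hfg
    intro w
    rw [dif_pos (e w).2, tau_eta]
    exact EqvGen.refl _
  · -- hgf
    intro a ha
    have ha1 : a ≠ x := fun hc => ha (by rw [hc]; exact EqvGen.refl x)
    have ha2 : a ≠ y := fun hc => ha (by rw [hc]; exact hy_eqv)
    rw [dif_pos ⟨ha1, ha2⟩]
    simp only [Equiv.apply_symm_apply]
    exact EqvGen.refl _
  · -- hgx
    intro w hc
    have := (closure _ _ hc).mpr (Or.inl rfl)
    rcases this with h | h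
    · exact (e w).2.1 h
    · exact (e w).2.2 h

private lemma gMixed (hCxy : ∀ c ∈ C, G.inv c x = y)
    (hnotC : ∀ c ∉ C, G.inv c x ≠ y)
    (he : ∀ i w, (G.inv i (e w : G.V) = x → ((e (G'.inv i w)) : G.V) = G.inv i y) ∧
      (G.inv i (e w : G.V) = y → ((e (G'.inv i w)) : G.V) = G.inv i x) ∧
      (G.inv i (e w : G.V) ≠ x → G.inv i (e w : G.V) ≠ y →
        ((e (G'.inv i w)) : G.V) = G.inv i (e w : G.V)))
    (b1 b2 : Fin (d + 1)) (hb1 : b1 ∉ C) (hb2 : b2 ∈ C) :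
    G.g {b1, b2} = G'.g {b1, b2} := by
  classical
  have hyx : ∀ c ∈ C, G.inv c y = x := by
    intro c hc
    rw [← hCxy c hc]
    exact G.invol c x
  have hnotC' : ∀ c ∉ C, G.inv c y ≠ x := by
    intro c hc hcc
    exact hnotC c hc (by rw [← hcc, G.invol])
  have hxy : x ≠ y := fun hh => G.noFix b2 x (by rw [hCxy b2 hb2, ← hh])
  have px : G.inv b1 x ≠ x ∧ G.inv b1 x ≠ y := ⟨G.noFix b1 x, hnotC b1 hb1⟩
  have py : G.inv b1 y ≠ x ∧ G.inv b1 y ≠ y := ⟨hnotC' b1 hb1, G.noFix b1 y⟩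
  set f : G.V → G'.V := fun v => if h : v ≠ x ∧ v ≠ y then e.symm ⟨v, h⟩
    else if v = x then e.symm ⟨G.inv b1 x, px⟩ else e.symm ⟨G.inv b1 y, py⟩ with hf
  have fx : f x = e.symm ⟨G.inv b1 x, px⟩ := by
    rw [hf]; dsimp only; rw [dif_neg (by tauto), if_pos rfl]
  have fy : f y = e.symm ⟨G.inv b1 y, py⟩ := by
    rw [hf]; dsimp only; rw [dif_neg (by tauto), if_neg (Ne.symm hxy)]
  have fv : ∀ v (h : v ≠ x ∧ v ≠ y), f v = e.symm ⟨v, h⟩ := by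
    intro v h; rw [hf]; dsimp only; rw [dif_pos h]
  have hweld : G'.inv b1 (e.symm ⟨G.inv b1 x, px⟩) = e.symm ⟨G.inv b1 y, py⟩ :=
    weld_edge G G' x y e he b1 px py
  refine card_quot_eq f (fun w => ((e w : {v : G.V // v ≠ x ∧ v ≠ y}) : G.V)) ?_ ?_ ?_ ?_
  · -- hf: generators
    rintro a b ⟨i, hi, rfl⟩
    by_cases hax : a = x
    · subst hax
      rcases hi with rfl | rfl
      · rw [fx, fv _ px]
        exact EqvGen.refl _
      · rw [hCxy i hb2, fx, fy]
        exact EqvGen.rel _ _ ⟨b1, Or.inl rfl, hweld⟩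
    · by_cases hay : a = y
      · subst hay
        rcases hi with rfl | rfl
        · rw [fy, fv _ py]; exact EqvGen.refl _
        · rw [hyx i hb2, fy, fx]
          exact EqvGen.symm _ _ (EqvGen.rel _ _ ⟨b1, Or.inl rfl, hweld⟩)
      · have ha : a ≠ x ∧ a ≠ y := ⟨hax, hay⟩
        by_cases hbx : G.inv i a = x
        · have hia : a = G.inv i x := by rw [← G.invol i a, hbx]
          rcases hi with rfl | rfl
          · rw [fv a ha, hbx, fx]
            have heq : (⟨a, ha⟩ : {v : G.V // v ≠ x ∧ v ≠ y}) = ⟨G.inv i x, px⟩ :=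
              Subtype.ext hia
            rw [heq]
            exact EqvGen.refl _
          · exact absurd (by rw [hia, hCxy i hb2]) hay
        · by_cases hby : G.inv i a = y
          · have hia : a = G.inv i y := by rw [← G.invol i a, hby]
            rcases hi with rfl | rfl
            · rw [fv a ha, hby, fy]
              have heq : (⟨a, ha⟩ : {v : G.V // v ≠ x ∧ v ≠ y}) = ⟨G.inv i y, py⟩ :=
                Subtype.ext hia
              rw [heq]
              exact EqvGen.refl _
            · exact absurd (by rw [hia, hyx i hb2]) hax
          · rw [fv a ha, fv _ ⟨hbx, hby⟩]
            exact EqvGen.rel _ _ ⟨i, hi, direct_edge G G' x y e he i a _ ha ⟨hbx, hby⟩ rfl⟩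
  · -- hg
    rintro w w' ⟨i, hi, rfl⟩
    by_cases hwx : G.inv i (e w : G.V) = x
    · have hi1 : i = b1 := by
        rcases hi with rfl | rfl
        · rfl
        · exact absurd (by rw [← G.invol i (e w : G.V), hwx, hCxy i hb2]) (e w).2.2
      subst hi1
      have h1 := (he i w).1 hwx
      refine EqvGen.trans _ _ _ (EqvGen.rel _ _ ⟨i, Or.inl rfl, hwx⟩) ?_
      refine EqvGen.trans _ _ _ (EqvGen.rel _ _ ⟨b2, Or.inr rfl, hCxy b2 hb2⟩) ?_
      exact EqvGen.rel _ _ ⟨i, Or.inl rfl, h1.symm⟩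
    · by_cases hwy : G.inv i (e w : G.V) = y
      · have hi1 : i = b1 := by
          rcases hi with rfl | rfl
          · rfl
          · exact absurd (by rw [← G.invol i (e w : G.V), hwy, hyx i hb2]) (e w).2.1
        subst hi1
        have h1 := (he i w).2.1 hwy
        refine EqvGen.trans _ _ _ (EqvGen.rel _ _ ⟨i, Or.inl rfl, hwy⟩) ?_
        refine EqvGen.trans _ _ _ (EqvGen.rel _ _ ⟨b2, Or.inr rfl, hyx b2 hb2⟩) ?_
        exact EqvGen.rel _ _ ⟨i, Or.inl rfl, h1.symm⟩
      · exact EqvGen.rel _ _ ⟨i, hi, ((he i w).2.2 hwx hwy).symm⟩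
  · -- hgf
    intro a
    by_cases hax : a = x
    · subst hax
      rw [fx]
      simp only [Equiv.apply_symm_apply]
      exact EqvGen.rel _ _ ⟨b1, Or.inl rfl, G.invol b1 _⟩
    · by_cases hay : a = y
      · subst hay
        rw [fy]
        simp only [Equiv.apply_symm_apply]
        exact EqvGen.rel _ _ ⟨b1, Or.inl rfl, G.invol b1 _⟩
      · rw [fv a ⟨hax, hay⟩]
        simp only [Equiv.apply_symm_apply]
        exact EqvGen.refl _
  · -- hfg
    intro w
    rw [fv _ (e w).2, tau_eta]
    exact EqvGen.refl _

private lemma gB (hCxy : ∀ c ∈ C, G.inv c x = y)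
    (hnotC : ∀ c ∉ C, G.inv c x ≠ y)
    (hndip : ¬ EqvGen (G.step {j | j ∉ (C : Set (Fin (d + 1)))}) x y)
    (hxy : x ≠ y)
    (he : ∀ i w, (G.inv i (e w : G.V) = x → ((e (G'.inv i w)) : G.V) = G.inv i y) ∧
      (G.inv i (e w : G.V) = y → ((e (G'.inv i w)) : G.V) = G.inv i x) ∧
      (G.inv i (e w : G.V) ≠ x → G.inv i (e w : G.V) ≠ y →
        ((e (G'.inv i w)) : G.V) = G.inv i (e w : G.V)))
    (b1 b2 : Fin (d + 1)) (hb1 : b1 ∉ C) (hb2 : b2 ∉ C) :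
    G.g {b1, b2} = G'.g {b1, b2} + 1 := by
  classical
  have hnotC' : ∀ c ∉ C, G.inv c y ≠ x := by
    intro c hc hcc
    exact hnotC c hc (by rw [← hcc, G.invol])
  have hmono : ∀ a b, G.step {b1, b2} a b →
      EqvGen (G.step {j | j ∉ (C : Set (Fin (d + 1)))}) a b := by
    rintro a b ⟨i, hi, rfl⟩
    refine EqvGen.rel _ _ ⟨i, ?_, rfl⟩
    rcases hi with rfl | rfl
    · exact hb1
    · exact hb2
  have hndipB : ¬ EqvGen (G.step {b1, b2}) x y := fun hc =>
    hndip (eqvGen_map id (fun a b h => hmono a b h) hc)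
  have hndipB' : ¬ EqvGen (G.step {b1, b2}) y x := fun hc => hndipB (EqvGen.symm _ _ hc)
  have px : G.inv b1 x ≠ x ∧ G.inv b1 x ≠ y := ⟨G.noFix b1 x, hnotC b1 hb1⟩
  have py : G.inv b1 y ≠ x ∧ G.inv b1 y ≠ y := ⟨hnotC' b1 hb1, G.noFix b1 y⟩
  set R2 : G.V → G.V → Prop := fun a b => G.step {b1, b2} a b ∨ (a = x ∧ b = y) with hR2
  have hinl : ∀ a b, G.step {b1, b2} a b → EqvGen R2 a b := fun a b h =>
    EqvGen.rel _ _ (Or.inl h)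
  -- Step 1: collapsing the two components of x and y
  have step1 : G.g {b1, b2} = Nat.card (Quotient (EqvGen.setoid R2)) + 1 := by
    refine card_quot_succ id (fun a => if EqvGen (G.step {b1, b2}) a x then y else a) x
      ?_ ?_ ?_ ?_ ?_
    · intro a b h
      exact EqvGen.rel _ _ (Or.inl h)
    · intro a b h
      rcases h with h | ⟨rfl, rfl⟩
      · by_cases hax : EqvGen (G.step {b1, b2}) a x
        · rw [if_pos hax,
            if_pos (EqvGen.trans _ _ _ (EqvGen.symm _ _ (EqvGen.rel _ _ h)) hax)]
          exact EqvGen.refl _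
        · rw [if_neg hax, if_neg (fun hc => hax (EqvGen.trans _ _ _ (EqvGen.rel _ _ h) hc))]
          exact EqvGen.rel _ _ h
      · rw [if_pos (EqvGen.refl _), if_neg hndipB']
        exact EqvGen.refl _
    · intro b
      by_cases hbx : EqvGen (G.step {b1, b2}) b x
      · rw [if_pos hbx]
        refine EqvGen.trans _ _ _ (EqvGen.symm _ _ (EqvGen.rel _ _ (Or.inr ⟨rfl, rfl⟩))) ?_
        exact eqvGen_map (t := R2) id (fun a b h => EqvGen.rel _ _ (Or.inl h)) (EqvGen.symm _ _ hbx)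
      · rw [if_neg hbx]
        exact EqvGen.refl _
    · intro a ha
      simp only [id_eq]
      rw [if_neg ha]
      exact EqvGen.refl _
    · intro b
      by_cases hbx : EqvGen (G.step {b1, b2}) b x
      · rw [if_pos hbx]; exact hndipB'
      · rw [if_neg hbx]; exact hbx
  -- the map to G'
  set f : G.V → G'.V := fun v => if h : v ≠ x ∧ v ≠ y then e.symm ⟨v, h⟩
    else if v = x then e.symm ⟨G.inv b1 x, px⟩ else e.symm ⟨G.inv b1 y, py⟩ with hf
  have fx : f x = e.symm ⟨G.inv b1 x, px⟩ := by
    rw [hf]; dsimp only; rw [dif_neg (by tauto), if_pos rfl]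
  have fy : f y = e.symm ⟨G.inv b1 y, py⟩ := by
    rw [hf]; dsimp only; rw [dif_neg (by tauto), if_neg (Ne.symm hxy)]
  have fv : ∀ v (h : v ≠ x ∧ v ≠ y), f v = e.symm ⟨v, h⟩ := by
    intro v h; rw [hf]; dsimp only; rw [dif_pos h]
  have hfx1 : f x = f (G.inv b1 x) := by rw [fx, fv _ px]
  have hfy1 : f y = f (G.inv b1 y) := by rw [fy, fv _ py]
  -- the walk argument
  have hwalk : ∀ z : G.V, (z = x ∨ z = y) →
      EqvGen (G'.step {b1, b2}) (f (G.inv b1 z)) (f (G.inv b2 z)) := by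
    intro z hz
    have hmono0 : ∀ a b, (G.inv b1 a = b ∨ G.inv b2 a = b) →
        EqvGen (G.step {j | j ∉ (C : Set (Fin (d + 1)))}) a b := by
      rintro a b (rfl | rfl)
      · exact EqvGen.rel _ _ ⟨b1, hb1, rfl⟩
      · exact EqvGen.rel _ _ ⟨b2, hb2, rfl⟩
    have hSz : ∀ v, (v = x ∨ v = y) →
        EqvGen (fun a b => G.inv b1 a = b ∨ G.inv b2 a = b) z v → v = z := by
      intro v hv hzv
      have hzv' : EqvGen (G.step {j | j ∉ (C : Set (Fin (d + 1)))}) z v :=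
        eqvGen_map id (fun a b h => hmono0 a b h) hzv
      rcases hz with rfl | rfl <;> rcases hv with rfl | rfl
      · rfl
      · exact absurd hzv' hndip
      · exact absurd (EqvGen.symm _ _ hzv') hndip
      · rfl
    have hw := walk_lemma (G.inv b1) (G.inv b2) (G.invol b1) (G.invol b2)
      (G.noFix b1) (G.noFix b2) z (fun v => v = x ∨ v = y) hSz
    refine eqvGen_map f ?_ hw
    rintro a b ⟨hab, hna, hnb⟩
    rw [fv a ⟨fun h => hna (Or.inl h), fun h => hna (Or.inr h)⟩,
      fv b ⟨fun h => hnb (Or.inl h), fun h => hnb (Or.inr h)⟩]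
    rcases hab with h | h
    · exact EqvGen.rel _ _ ⟨b1, Or.inl rfl, direct_edge G G' x y e he b1 a b _ _ h⟩
    · exact EqvGen.rel _ _ ⟨b2, Or.inr rfl, direct_edge G G' x y e he b2 a b _ _ h⟩
  have hkey : ∀ i, (i = b1 ∨ i = b2) → ∀ z, (z = x ∨ z = y) →
      EqvGen (G'.step {b1, b2}) (f z) (f (G.inv i z)) := by
    intro i hi z hz
    have hfz : f z = f (G.inv b1 z) := by
      rcases hz with rfl | rfl
      · exact hfx1
      · exact hfy1
    rw [hfz]
    rcases hi with rfl | rfl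
    · exact EqvGen.refl _
    · exact hwalk z hz
  -- Step 2
  have step2 : Nat.card (Quotient (EqvGen.setoid R2)) = G'.g {b1, b2} := by
    refine card_quot_eq f (fun w => ((e w : {v : G.V // v ≠ x ∧ v ≠ y}) : G.V)) ?_ ?_ ?_ ?_
    · intro a b hab
      rcases hab with ⟨i, hi, rfl⟩ | ⟨rfl, rfl⟩
      · have hi' : i = b1 ∨ i = b2 := hi
        by_cases hax : a = x
        · rw [hax]
          exact hkey i hi' x (Or.inl rfl)
        · by_cases hay : a = y
          · rw [hay]
            exact hkey i hi' y (Or.inr rfl)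
          · by_cases hbx : G.inv i a = x
            · have hia : a = G.inv i x := by rw [← G.invol i a, hbx]
              rw [hbx]
              refine EqvGen.symm _ _ ?_
              have hk := hkey i hi' x (Or.inl rfl)
              rw [← hia] at hk
              exact hk
            · by_cases hby : G.inv i a = y
              · have hia : a = G.inv i y := by rw [← G.invol i a, hby]
                rw [hby]
                refine EqvGen.symm _ _ ?_
                have hk := hkey i hi' y (Or.inr rfl)
                rw [← hia] at hk
                exact hk
              · rw [fv a ⟨hax, hay⟩, fv _ ⟨hbx, hby⟩]
                exact EqvGen.rel _ _
                  ⟨i, hi, direct_edge G G' x y e he i a _ ⟨hax, hay⟩ ⟨hbx, hby⟩ rfl⟩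
      · rw [hfx1, hfy1, fv _ px, fv _ py]
        exact EqvGen.rel _ _ ⟨b1, Or.inl rfl, weld_edge G G' _ _ e he b1 px py⟩
    · rintro w w' ⟨i, hi, rfl⟩
      by_cases hwx : G.inv i (e w : G.V) = x
      · have h1 := (he i w).1 hwx
        have h2 : G.inv i y ≠ x := by
          have hiC : i ∉ C := by
            rcases hi with rfl | rfl
            · exact hb1
            · exact hb2
          exact hnotC' i hiC
        refine EqvGen.trans _ _ _ (EqvGen.rel _ _ (Or.inl ⟨i, hi, hwx⟩)) ?_
        refine EqvGen.trans _ _ _ (EqvGen.rel _ _ (Or.inr ⟨rfl, rfl⟩)) ?_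
        exact EqvGen.rel _ _ (Or.inl ⟨i, hi, h1.symm⟩)
      · by_cases hwy : G.inv i (e w : G.V) = y
        · have h1 := (he i w).2.1 hwy
          refine EqvGen.trans _ _ _ (EqvGen.rel _ _ (Or.inl ⟨i, hi, hwy⟩)) ?_
          refine EqvGen.trans _ _ _
            (EqvGen.symm _ _ (EqvGen.rel _ _ (Or.inr ⟨rfl, rfl⟩))) ?_
          exact EqvGen.rel _ _ (Or.inl ⟨i, hi, h1.symm⟩)
        · exact EqvGen.rel _ _ (Or.inl ⟨i, hi, ((he i w).2.2 hwx hwy).symm⟩)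
    · intro a
      by_cases hax : a = x
      · rw [hax, fx]
        simp only [Equiv.apply_symm_apply]
        exact EqvGen.rel _ _ (Or.inl ⟨b1, Or.inl rfl, G.invol b1 x⟩)
      · by_cases hay : a = y
        · rw [hay, fy]
          simp only [Equiv.apply_symm_apply]
          exact EqvGen.rel _ _ (Or.inl ⟨b1, Or.inl rfl, G.invol b1 y⟩)
        · rw [fv a ⟨hax, hay⟩]
          simp only [Equiv.apply_symm_apply]
          exact EqvGen.refl _
    · intro w
      rw [fv _ (e w).2, tau_eta]
      exact EqvGen.refl _
  rw [step1, step2]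




/-- eliminating an `r`-dipole changes the Gurau degree by
`(d-1)!/2 · (r-1)(d-r)`; in particular it never increases it, and `1`- and
`d`-dipole eliminations leave it unchanged. -/
theorem omegaG_elim_dipole {d : ℕ} (G G' : CG (d + 1)) (hG : G.Connected)
    (hG' : G'.Connected) (r : ℕ) (hr1 : 1 ≤ r) (hrd : r ≤ d)
    (C : Finset (Fin (d + 1))) (hC : C.card = r) (x y : G.V)
    (h : CG.ElimDipole G G' C x y) :
    G.omegaG = ((d - 1).factorial : ℚ) / 2 * ((r : ℚ) - 1) * ((d : ℚ) - (r : ℚ)) + G'.omegaG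
      ∧ G'.omegaG ≤ G.omegaG
      ∧ ((r = 1 ∨ r = d) → G.omegaG = G'.omegaG) := by
  classical
  obtain ⟨k, rfl⟩ : ∃ k, d = k + 1 := ⟨d - 1, by omega⟩
  obtain ⟨⟨hCxy, hndip⟩, hnotC, e, he⟩ := h
  obtain ⟨c₀, hc₀⟩ : ∃ c, c ∈ C := Finset.card_pos.mp (by omega)
  have hxy : x ≠ y := fun hh => G.noFix c₀ x (by rw [hCxy c₀ hc₀, ← hh])
  have hnotC' : ∀ c ∉ C, G.inv c y ≠ x := fun c hc hcc =>
    hnotC c hc (by rw [← hcc, G.invol])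
  -- vertex counts
  have hcard2 : Nat.card G.V = Nat.card G'.V + 2 := by
    have h1 : Nat.card G'.V = Nat.card {v : G.V // v ≠ x ∧ v ≠ y} := Nat.card_congr e
    rw [h1, Nat.card_eq_fintype_card, Nat.card_eq_fintype_card, card_ne2 x y hxy]
    have h3 : 2 ≤ Fintype.card G.V := Fintype.one_lt_card_iff_nontrivial.mpr ⟨⟨x, y, hxy⟩⟩
    omega
  -- a basepoint of G'
  obtain ⟨c', hc'⟩ : ∃ c, c ∉ C := by
    by_contra hcon
    push_neg at hcon
    have hcu : C = Finset.univ := Finset.eq_univ_iff_forall.mpr hcon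
    rw [hcu, Finset.card_univ, Fintype.card_fin] at hC
    omega
  have pw : G.inv c' x ≠ x ∧ G.inv c' x ≠ y := ⟨G.noFix c' x, hnotC c' hc'⟩
  set w₀ : G'.V := e.symm ⟨G.inv c' x, pw⟩ with hw₀
  -- per-pair component counts
  have hpair : ∀ u v : Fin (k + 2), u ≠ v →
      (G.g {u, v} : ℚ) = (G'.g {u, v} : ℚ) +
        (if (u ∈ C ↔ v ∈ C) then (1 : ℚ) else 0) := by
    intro u v huv
    by_cases hu : u ∈ C <;> by_cases hv : v ∈ C
    · rw [if_pos (iff_of_true hu hv), gA G G' C x y e hCxy w₀ he u v hu hv]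
      push_cast; ring
    · have h0 : ({u, v} : Set (Fin (k + 2))) = {v, u} := Set.pair_comm u v
      rw [h0, gMixed G G' C x y e hCxy hnotC he v u hv hu,
        if_neg (fun hiff => hv (hiff.mp hu))]
      ring
    · rw [gMixed G G' C x y e hCxy hnotC he u v hu hv,
        if_neg (fun hiff => hu (hiff.mpr hv))]
      ring
    · rw [if_pos (iff_of_false hu hv), gB G G' C x y e hCxy hnotC hndip hxy he u v hu hv]
      push_cast; ring
  have hpQ : G.pQ = G'.pQ + 1 := by
    unfold CG.pQ
    rw [hcard2]; push_cast; ring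
  haveI : Fact (1 < k + 2) := ⟨by omega⟩
  have hjj : ∀ j : ZMod (k + 2), j ≠ j + 1 := by
    intro j hj
    have h1 : (0 : ZMod (k + 2)) = 1 := by
      conv_lhs at hj => rw [← add_zero j]
      exact add_left_cancel hj
    exact one_ne_zero h1.symm
  set χ : Fin (k + 2) → Fin (k + 2) → ℚ :=
    fun u v => if (u ∈ C ↔ v ∈ C) then (1 : ℚ) else 0 with hχ
  have hrho : ∀ ε : ZMod (k + 2) ≃ Fin (k + 2),
      G.rho ε = G'.rho ε -
        ((∑ j : ZMod (k + 2), χ (ε j) (ε (j + 1))) + (1 - (((k : ℚ) + 2) - 1))) / 2 := by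
    intro ε
    have hsum : ∑ j : ZMod (k + 2), (G.g {ε j, ε (j + 1)} : ℚ)
        = ∑ j : ZMod (k + 2), ((G'.g {ε j, ε (j + 1)} : ℚ) + χ (ε j) (ε (j + 1))) := by
      refine Finset.sum_congr rfl fun j _ => ?_
      exact hpair (ε j) (ε (j + 1)) (ε.injective.ne (hjj j))
    unfold CG.rho
    rw [hsum, Finset.sum_add_distrib, hpQ]
    push_cast
    ring
  -- the sum of χ over all labelings
  have hcardZ : Fintype.card (ZMod (k + 2)) = Fintype.card (Fin (k + 2)) := by
    simp [ZMod.card]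
  have hfilC : Finset.univ.filter (fun v : Fin (k + 2) => v ∈ C) = C := by
    ext v; simp
  have hfilNC : (Finset.univ.filter (fun v : Fin (k + 2) => v ∉ C)).card = (k + 2) - r := by
    have h0 : Finset.univ.filter (fun v : Fin (k + 2) => v ∉ C) = Finset.univ \ C := by
      ext v; simp
    rw [h0, Finset.card_sdiff_of_subset (Finset.subset_univ C), Finset.card_univ, Fintype.card_fin, hC]
  have hrle : r ≤ k + 2 := by omega
  have hfilNCQ : (((Finset.univ.filter (fun v : Fin (k + 2) => v ∉ C)).card : ℕ) : ℚ)
      = (k : ℚ) + 2 - (r : ℚ) := by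
    rw [hfilNC, Nat.cast_sub hrle]
    push_cast
    ring
  set Pval : ℚ := ((r : ℚ) * r + ((k : ℚ) + 2 - r) * ((k : ℚ) + 2 - r)) - ((k : ℚ) + 2)
    with hPval
  have hP : (∑ p : Fin (k + 2) × Fin (k + 2), if p.1 ≠ p.2 then χ p.1 p.2 else 0) = Pval := by
    have hsplit : ∀ p : Fin (k + 2) × Fin (k + 2),
        (if p.1 ≠ p.2 then χ p.1 p.2 else 0)
          = χ p.1 p.2 - (if p.1 = p.2 then χ p.1 p.2 else 0) := by
      intro p; by_cases hp : p.1 = p.2 <;> simp [hp]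
    rw [Finset.sum_congr rfl (fun p _ => hsplit p), Finset.sum_sub_distrib]
    have hrow : ∀ u : Fin (k + 2), ∑ v, χ u v
        = if u ∈ C then (r : ℚ) else ((k : ℚ) + 2 - r) := by
      intro u
      by_cases hu : u ∈ C
      · rw [if_pos hu]
        have hv' : ∀ v, χ u v = if v ∈ C then (1 : ℚ) else 0 := by
          intro v; rw [hχ]; by_cases hv : v ∈ C <;> simp [hu, hv]
        rw [Finset.sum_congr rfl fun v _ => hv' v, Finset.sum_boole, hfilC, hC]
      · rw [if_neg hu]
        have hv' : ∀ v, χ u v = if v ∉ C then (1 : ℚ) else 0 := by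
          intro v; rw [hχ]; by_cases hv : v ∈ C <;> simp [hu, hv]
        rw [Finset.sum_congr rfl fun v _ => hv' v, Finset.sum_boole]
        exact hfilNCQ
    have h1 : ∑ p : Fin (k + 2) × Fin (k + 2), χ p.1 p.2
        = (r : ℚ) * r + ((k : ℚ) + 2 - r) * ((k : ℚ) + 2 - r) := by
      rw [Fintype.sum_prod_type]
      rw [Finset.sum_congr rfl fun u _ => hrow u]
      rw [Finset.sum_ite, Finset.sum_const, Finset.sum_const, nsmul_eq_mul, nsmul_eq_mul,
        hfilNCQ, hfilC, hC]
    have h3 : ∑ p : Fin (k + 2) × Fin (k + 2), (if p.1 = p.2 then χ p.1 p.2 else 0)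
        = ((k : ℚ) + 2) := by
      rw [Fintype.sum_prod_type]
      have h4 : ∀ u : Fin (k + 2), ∑ v, (if u = v then χ u v else 0) = 1 := by
        intro u
        rw [Finset.sum_ite_eq]
        simp [hχ]
      rw [Finset.sum_congr rfl fun u _ => h4 u, Finset.sum_const, Finset.card_univ,
        Fintype.card_fin]
      push_cast
      ring
    rw [h1, h3, hPval]
  have hT : ∑ ε : ZMod (k + 2) ≃ Fin (k + 2), (∑ j : ZMod (k + 2), χ (ε j) (ε (j + 1)))
      = ((k : ℚ) + 2) * (k.factorial : ℚ) * Pval := by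
    rw [Finset.sum_comm]
    have h5 : ∀ j : ZMod (k + 2),
        (∑ ε : ZMod (k + 2) ≃ Fin (k + 2), χ (ε j) (ε (j + 1)))
          = (k.factorial : ℚ) * Pval := by
      intro j
      rw [sum_eval2 χ j (j + 1) (hjj j) hcardZ, hP,
        show Fintype.card (ZMod (k + 2)) - 2 = k by simp [ZMod.card]]
    rw [Finset.sum_congr rfl fun j _ => h5 j, Finset.sum_const, Finset.card_univ, ZMod.card,
      nsmul_eq_mul]
    push_cast
    ring
  have hNfact : (Fintype.card (ZMod (k + 2) ≃ Fin (k + 2)) : ℚ) = ((k + 2).factorial : ℚ) := by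
    rw [Fintype.card_equiv (Fintype.equivOfCardEq hcardZ), ZMod.card]
  have hsum_eps : ∑ ε : ZMod (k + 2) ≃ Fin (k + 2), G.rho ε
      = (∑ ε : ZMod (k + 2) ≃ Fin (k + 2), G'.rho ε)
        - ((((k : ℚ) + 2) * (k.factorial : ℚ) * Pval)
            + ((k + 2).factorial : ℚ) * (1 - (((k : ℚ) + 2) - 1))) / 2 := by
    rw [Finset.sum_congr rfl fun ε _ => hrho ε, Finset.sum_sub_distrib, ← Finset.sum_div,
      Finset.sum_add_distrib, hT, Finset.sum_const, Finset.card_univ, nsmul_eq_mul, hNfact]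
  have hfac2 : ((k + 2).factorial : ℚ) = ((k : ℚ) + 2) * (((k : ℚ) + 1) * (k.factorial : ℚ)) := by
    rw [show k + 2 = (k + 1) + 1 by ring, Nat.factorial_succ, Nat.factorial_succ]
    push_cast
    ring
  have homG : G.omegaG = (∑ ε : ZMod (k + 2) ≃ Fin (k + 2), G.rho ε) / (2 * ((k : ℚ) + 2)) := by
    unfold CG.omegaG
    push_cast
    ring
  have homG' : G'.omegaG = (∑ ε : ZMod (k + 2) ≃ Fin (k + 2), G'.rho ε) / (2 * ((k : ℚ) + 2)) := by
    unfold CG.omegaG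
    push_cast
    ring
  have main : G.omegaG = ((k.factorial : ℚ)) / 2 * ((r : ℚ) - 1) * (((k : ℚ) + 1) - (r : ℚ))
      + G'.omegaG := by
    rw [homG, hsum_eps, homG', hfac2, hPval]
    have hk2 : ((k : ℚ) + 2) ≠ 0 := by positivity
    field_simp
    ring
  have hgoal1 : G.omegaG = (((k + 1 - 1).factorial : ℚ)) / 2 * ((r : ℚ) - 1)
      * (((k + 1 : ℕ) : ℚ) - (r : ℚ)) + G'.omegaG := by
    rw [main]
    norm_num
  refine ⟨hgoal1, ?_, ?_⟩
  · rw [main]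
    have h1 : (0 : ℚ) ≤ (k.factorial : ℚ) := Nat.cast_nonneg _
    have h2 : (1 : ℚ) ≤ (r : ℚ) := by exact_mod_cast hr1
    have h3 : (r : ℚ) ≤ (k : ℚ) + 1 := by exact_mod_cast hrd
    nlinarith [mul_nonneg (mul_nonneg (by linarith : (0:ℚ) ≤ (k.factorial : ℚ) / 2)
      (by linarith : (0:ℚ) ≤ (r : ℚ) - 1)) (by linarith : (0:ℚ) ≤ ((k : ℚ) + 1) - (r : ℚ))]
  · rintro (rfl | hr)
    · rw [main]; norm_num
    · rw [main, hr]; push_cast; ring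
end Graph
end

section
/- Let Γ be a non-bipartite (d+1)-colored graph and ε = (ε₀,…,ε_d) a cyclic permutation of Δ_d. If there is an index i such that (a) every {ε_{i−1}, ε_i, ε_{i+1}}-residue of Γ is bipartite, and (b) every residue missing color ε_i is either bipartite or non-bipartite with integer regular genus with respect to the permutation induced by ε, then ρ_ε(Γ) is an integer. -/
open Relation

section SignPart
open Relation Equiv Equiv.Perm

set_option linter.unusedSectionVars false

variable {X : Type} [Fintype X] [DecidableEq X]

noncomputable def orbCount (σ : Perm X) : ℕ :=
  Nat.card (Quotient (EqvGen.setoid (fun x y => σ x = y)))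

lemma eqvGen_iff_sameCycle (σ : Perm X) (a b : X) :
    EqvGen (fun x y => σ x = y) a b ↔ σ.SameCycle a b := by
  constructor
  · intro h; induction h with
    | rel x y h' => exact ⟨1, by simpa using h'⟩
    | refl => exact SameCycle.refl _ _
    | symm _ _ _ ih => exact ih.symm
    | trans _ _ _ _ _ ih1 ih2 => exact ih1.trans ih2
  · rintro ⟨k, rfl⟩
    induction k using Int.induction_on with
    | zero => simpa using EqvGen.refl a
    | succ n ih =>
        refine EqvGen.trans _ _ _ ih (EqvGen.rel _ _ ?_)
        rw [add_comm, zpow_add, zpow_one, Perm.mul_apply]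
    | pred n ih =>
        refine EqvGen.trans _ _ _ ih (EqvGen.symm _ _ (EqvGen.rel _ _ ?_))
        show σ ((σ ^ (-(n:ℤ) - 1)) a) = (σ ^ (-(n:ℤ))) a
        have : (σ ^ (-(n:ℤ))) a = (σ ^ (1 + (-(n:ℤ) - 1))) a := by ring_nf
        rw [this, zpow_add, zpow_one, Perm.mul_apply]

lemma orbCount_eq (σ : Perm X) :
    orbCount σ = Fintype.card {x : X // σ x = x} + σ.cycleFactorsFinset.card := by
  classical
  have key : ∀ x y : X, EqvGen (fun x y => σ x = y) x y ↔ σ.SameCycle x y :=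
    eqvGen_iff_sameCycle σ
  let T := ({x : X // σ x = x} ⊕ {c : Perm X // c ∈ σ.cycleFactorsFinset})
  let F : X → T := fun x =>
    if h : σ x = x then Sum.inl ⟨x, h⟩
    else Sum.inr ⟨σ.cycleOf x, cycleOf_mem_cycleFactorsFinset_iff.mpr (mem_support.mpr h)⟩
  have hF : ∀ x y : X, EqvGen (fun x y => σ x = y) x y → F x = F y := by
    intro x y hxy
    rw [key] at hxy
    by_cases hx : σ x = x
    · have : y = x := by
        obtain ⟨k, rfl⟩ := hxy
        exact zpow_apply_eq_self_of_apply_eq_self hx k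
      subst this; rfl
    · have hy : ¬ σ y = y := by
        intro hy
        obtain ⟨k, rfl⟩ := hxy.symm
        have h1 : (σ ^ k) y = y := zpow_apply_eq_self_of_apply_eq_self hy k
        rw [h1] at hx
        exact hx hy
      simp only [F, dif_neg hx, dif_neg hy]
      exact congrArg _ (Subtype.ext hxy.cycleOf_eq)
  let Fq : Quotient (EqvGen.setoid (fun x y => σ x = y)) → T :=
    Quotient.lift F (fun x y h => hF x y h)
  have hbij : Function.Bijective Fq := by
    constructor
    · rintro ⟨x⟩ ⟨y⟩ hxy
      refine Quotient.sound ?_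
      show EqvGen _ x y
      rw [key]
      have hxy' : F x = F y := hxy
      by_cases hx : σ x = x <;> by_cases hy : σ y = y
      · simp only [F, dif_pos hx, dif_pos hy] at hxy'
        injection hxy' with h
        obtain rfl : x = y := congrArg Subtype.val h
        exact SameCycle.refl _ _
      · simp only [F, dif_pos hx, dif_neg hy] at hxy'
        exact absurd hxy' Sum.inl_ne_inr
      · simp only [F, dif_neg hx, dif_pos hy] at hxy'
        exact absurd hxy' Sum.inr_ne_inl
      · simp only [F, dif_neg hx, dif_neg hy] at hxy'
        injection hxy' with h
        have hcc : σ.cycleOf x = σ.cycleOf y := congrArg Subtype.val h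
        have : y ∈ (σ.cycleOf x).support := by
          rw [hcc, mem_support_cycleOf_iff' hy]
        exact (mem_support_cycleOf_iff.mp this).1
    · rintro (⟨x, hx⟩ | ⟨c, hc⟩)
      · exact ⟨⟦x⟧, by simp only [Fq, Quotient.lift_mk, F, dif_pos hx]⟩
      · obtain ⟨x, hx1, -⟩ := (mem_cycleFactorsFinset_iff.mp hc).1
        have hxs : x ∈ c.support := mem_support.mpr hx1
        have hcx : c x = σ x := (mem_cycleFactorsFinset_iff.mp hc).2 x hxs
        have hσx : ¬ σ x = x := fun h => hx1 (by rw [hcx, h])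
        refine ⟨⟦x⟧, ?_⟩
        simp only [Fq, Quotient.lift_mk, F, dif_neg hσx]
        exact congrArg Sum.inr (Subtype.ext (cycle_is_cycleOf hxs hc).symm)
  rw [orbCount, Nat.card_eq_of_bijective Fq hbij, Nat.card_eq_fintype_card,
    Fintype.card_sum, Fintype.card_coe]

lemma sign_eq_orbCount (σ : Perm X) :
    Perm.sign σ = (-1 : ℤˣ) ^ (Fintype.card X + orbCount σ) := by
  classical
  have h1 : Fintype.card {x : X // σ x = x} + σ.support.card = Fintype.card X := by
    rw [Fintype.card_subtype]
    have := Finset.card_filter_add_card_filter_not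
      (s := (Finset.univ : Finset X)) (p := fun x => σ x = x)
    simpa [Finset.card_univ, Perm.support] using this
  have h2 : Multiset.card σ.cycleType = σ.cycleFactorsFinset.card := by
    rw [cycleType_def, Multiset.card_map]; rfl
  rw [sign_of_cycleType, sum_cycleType, orbCount_eq, h2]
  have : Fintype.card X + (Fintype.card {x : X // σ x = x} + σ.cycleFactorsFinset.card)
      = σ.support.card + σ.cycleFactorsFinset.card
        + 2 * Fintype.card {x : X // σ x = x} := by omega
  rw [this]
  simp [pow_add, pow_mul]
end SignPart
section SignHelpers
open Relation Equiv Equiv.Perm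
set_option linter.unusedSectionVars false

lemma nat_card_eq_sum_fibers {α β : Type} [Finite α] [Fintype β] (φ : α → β) :
    Nat.card α = ∑ b : β, Nat.card {a : α // φ a = b} := by
  classical
  have : Fintype α := Fintype.ofFinite α
  rw [Nat.card_congr (Equiv.sigmaFiberEquiv φ).symm, Nat.card_eq_fintype_card,
    Fintype.card_sigma]
  simp [Nat.card_eq_fintype_card]

end SignHelpers

section CGHelpers
open Relation
namespace CG
variable {n : ℕ}

lemma step_symm (G : CG n) {B : Set (Fin n)} {a b : G.V} (h : G.step B a b) :
    G.step B b a := by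
  obtain ⟨i, hi, rfl⟩ := h; exact ⟨i, hi, G.invol i a⟩

lemma glue (G : CG n) {B : Set (Fin n)} (h : ∀ v, G.ResidueBipartite B v) :
    ∃ f : G.V → Bool, ∀ v, ∀ c ∈ B, f (G.inv c v) = ! f v := by
  classical
  have hrep : ∀ v : G.V,
      EqvGen (G.step B) (Quotient.mk (EqvGen.setoid (G.step B)) v).out v := fun v =>
    Quotient.exact ((Quotient.mk (EqvGen.setoid (G.step B)) v).out_eq)
  have key : ∀ v : G.V, ∀ c ∈ B,
      (Quotient.mk (EqvGen.setoid (G.step B)) (G.inv c v)) =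
        (Quotient.mk (EqvGen.setoid (G.step B)) v) := fun v c hc =>
    Quotient.sound (EqvGen.symm _ _ (EqvGen.rel _ _ ⟨c, hc, rfl⟩))
  refine ⟨fun v => Classical.choose
    (h (Quotient.mk (EqvGen.setoid (G.step B)) v).out) v, ?_⟩
  intro v c hc
  have spec := Classical.choose_spec
    (h (Quotient.mk (EqvGen.setoid (G.step B)) v).out) v (hrep v) c hc
  dsimp only
  rw [key v c hc]
  exact spec

lemma card_eq_two_mul (G : CG n) {f : G.V → Bool} {a : Fin n}
    (hf : ∀ v, f (G.inv a v) = ! f v) :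
    Nat.card G.V = 2 * Nat.card {v : G.V // f v = true} := by
  classical
  have e1 : {v : G.V // f v = false} ≃ {v : G.V // f v = true} :=
    { toFun := fun v => ⟨G.inv a v, by rw [hf, v.2]; rfl⟩
      invFun := fun v => ⟨G.inv a v, by rw [hf, v.2]; rfl⟩
      left_inv := fun v => Subtype.ext (G.invol a v)
      right_inv := fun v => Subtype.ext (G.invol a v) }
  have e2 : ({v : G.V // f v = true} ⊕ {v : G.V // f v = false}) ≃ G.V :=
    (Equiv.sumCongr (Equiv.refl _)
      (Equiv.subtypeEquivRight (fun v => by simp))).trans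
      (Equiv.sumCompl (fun v => f v = true))
  rw [← Nat.card_congr e2, Nat.card_sum, Nat.card_congr e1]
  omega

end CG
end CGHelpers

section PairPerm
open Relation Equiv Equiv.Perm
namespace CG
variable {n : ℕ}

noncomputable def pairPerm (G : CG n) (f : G.V → Bool) (a b : Fin n)
    (ha : ∀ v, f (G.inv a v) = ! f v) (hb : ∀ v, f (G.inv b v) = ! f v) :
    Equiv.Perm {v : G.V // f v = true} where
  toFun v := ⟨G.inv b (G.inv a v.1), by rw [hb, ha, v.2]; rfl⟩
  invFun v := ⟨G.inv a (G.inv b v.1), by rw [ha, hb, v.2]; rfl⟩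
  left_inv v := Subtype.ext (by simp only [G.invol])
  right_inv v := Subtype.ext (by simp only [G.invol])

lemma g_pair_eq_orbCount (G : CG n) (f : G.V → Bool) (a b : Fin n)
    (ha : ∀ v, f (G.inv a v) = ! f v) (hb : ∀ v, f (G.inv b v) = ! f v) :
    G.g {a, b} = orbCount (G.pairPerm f a b ha hb) := by
  classical
  set α := G.pairPerm f a b ha hb with hα
  have hαval : ∀ x : {v : G.V // f v = true}, (α x).1 = G.inv b (G.inv a x.1) :=
    fun x => rfl
  have hstep2 : ∀ x : {v : G.V // f v = true}, EqvGen (G.step {a,b}) x.1 (α x).1 := by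
    intro x
    rw [hαval]
    exact EqvGen.trans _ _ _ (EqvGen.rel _ _ ⟨a, by simp, rfl⟩)
      (EqvGen.rel _ _ ⟨b, by simp, rfl⟩)
  have hwd : ∀ x y : {v : G.V // f v = true}, EqvGen (fun x y => α x = y) x y →
      (Quotient.mk (EqvGen.setoid (G.step {a,b})) x.1) =
        Quotient.mk (EqvGen.setoid (G.step {a,b})) y.1 := by
    intro x y hxy
    induction hxy with
    | rel u w h' => exact Quotient.sound (h' ▸ hstep2 u)
    | refl _ => rfl
    | symm _ _ _ ih => exact ih.symm
    | trans _ _ _ _ _ ih1 ih2 => exact ih1.trans ih2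
  let Φ : Quotient (EqvGen.setoid (fun x y : {v : G.V // f v = true} => α x = y)) →
      Quotient (EqvGen.setoid (G.step {a,b})) :=
    Quotient.lift (fun x => Quotient.mk (EqvGen.setoid (G.step {a,b})) x.1) hwd
  have hfalse : ∀ v : G.V, ¬ (f v = true) → f (G.inv a v) = true := by
    intro v h
    rw [ha]
    rcases Bool.eq_false_or_eq_true (f v) with h' | h'
    · exact absurd h' h
    · rw [h']; rfl
  let rep : G.V → {v : G.V // f v = true} := fun v =>
    if h : f v = true then ⟨v, h⟩ else ⟨G.inv a v, hfalse v h⟩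
  have hrepwd : ∀ u w : G.V, EqvGen (G.step {a,b}) u w →
      (Quotient.mk (EqvGen.setoid (fun x y : {v : G.V // f v = true} => α x = y)) (rep u)) =
        Quotient.mk (EqvGen.setoid (fun x y : {v : G.V // f v = true} => α x = y)) (rep w) := by
    intro u w huw
    induction huw with
    | refl _ => rfl
    | symm _ _ _ ih => exact ih.symm
    | trans _ _ _ _ _ ih1 ih2 => exact ih1.trans ih2
    | rel u w h' =>
      obtain ⟨c, hc, rfl⟩ := h'
      have hc' : c = a ∨ c = b := by simpa using hc
      by_cases hu : f u = true
      · have hw : ¬ f (G.inv c u) = true := by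
          rcases hc' with rfl | rfl
          · rw [ha, hu]; simp
          · rw [hb, hu]; simp
        rcases hc' with rfl | rfl
        · have : rep (G.inv c u) = rep u := by
            simp only [rep, dif_neg hw, dif_pos hu]
            exact Subtype.ext (G.invol c u)
          rw [this]
        · refine Quotient.sound (EqvGen.symm _ _ (EqvGen.rel _ _ ?_))
          show α (rep (G.inv c u)) = rep u
          simp only [rep, dif_neg hw, dif_pos hu]
          refine Subtype.ext ?_
          show G.inv c (G.inv a (G.inv a (G.inv c u))) = u
          rw [G.invol, G.invol]
      · have hw : f (G.inv c u) = true := by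
          rcases hc' with rfl | rfl
          · exact hfalse u hu
          · rw [hb]
            rcases Bool.eq_false_or_eq_true (f u) with h' | h'
            · exact absurd h' hu
            · rw [h']; rfl
        rcases hc' with rfl | rfl
        · have : rep (G.inv c u) = rep u := by
            simp only [rep, dif_pos hw, dif_neg hu]
          rw [this]
        · refine Quotient.sound (EqvGen.rel _ _ ?_)
          show α (rep u) = rep (G.inv c u)
          simp only [rep, dif_pos hw, dif_neg hu]
          refine Subtype.ext ?_
          show G.inv c (G.inv a (G.inv a u)) = G.inv c u
          rw [G.invol]
  let Ψ : Quotient (EqvGen.setoid (G.step {a,b})) →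
      Quotient (EqvGen.setoid (fun x y : {v : G.V // f v = true} => α x = y)) :=
    Quotient.lift (fun v => Quotient.mk (EqvGen.setoid
      (fun x y : {v : G.V // f v = true} => α x = y)) (rep v)) hrepwd
  have hΨΦ : ∀ q, Ψ (Φ q) = q := by
    refine Quotient.ind ?_
    intro x
    show Quotient.mk _ (rep x.1) = Quotient.mk _ x
    have : rep x.1 = x := by simp only [rep, dif_pos x.2]
    rw [this]
  have hΦΨ : ∀ q, Φ (Ψ q) = q := by
    refine Quotient.ind ?_
    intro v
    show Quotient.mk _ (rep v).1 = Quotient.mk _ v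
    by_cases h : f v = true
    · simp only [rep, dif_pos h]
    · simp only [rep, dif_neg h]
      exact Quotient.sound (EqvGen.symm _ _ (EqvGen.rel _ _ ⟨a, by simp, rfl⟩))
  have hbij : Function.Bijective Φ := Function.bijective_iff_has_inverse.mpr ⟨Ψ, hΨΦ, hΦΨ⟩
  exact (Nat.card_eq_of_bijective Φ hbij).symm

lemma sign_pairPerm (G : CG n) (f : G.V → Bool) (a b : Fin n)
    [DecidableEq {v : G.V // f v = true}]
    (ha : ∀ v, f (G.inv a v) = ! f v) (hb : ∀ v, f (G.inv b v) = ! f v) :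
    Perm.sign (G.pairPerm f a b ha hb) =
      (-1 : ℤˣ) ^ (Nat.card {v : G.V // f v = true} + G.g {a, b}) := by
  rw [g_pair_eq_orbCount G f a b ha hb, sign_eq_orbCount, Nat.card_eq_fintype_card]

lemma sum_zmod_eq_range {M : Type} [AddCommMonoid M] {m : ℕ} [NeZero m] (F : ZMod m → M) :
    ∑ k : ZMod m, F k = ∑ k ∈ Finset.range m, F ((k : ℕ) : ZMod m) := by
  refine Finset.sum_nbij' (fun z => z.val) (fun k => ((k : ℕ) : ZMod m)) ?_ ?_ ?_ ?_ ?_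
  · intro z _; exact Finset.mem_range.mpr (ZMod.val_lt z)
  · intro k _; exact Finset.mem_univ _
  · intro z _; exact ZMod.natCast_rightInverse z
  · intro k hk; exact ZMod.val_cast_of_lt (Finset.mem_range.mp hk)
  · intro z _; rw [ZMod.natCast_rightInverse z]

lemma tel (G : CG n) (m : ℕ) [NeZero m] (η : ZMod m → Fin n) (f : G.V → Bool)
    (hf : ∀ (k : ZMod m) (v : G.V), f (G.inv (η k) v) = ! f v) :
    Even ((∑ k : ZMod m, G.g {η k, η (k+1)}) + m * Nat.card {v : G.V // f v = true}) := by
  classical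
  letI : DecidableEq {v : G.V // f v = true} := Classical.decEq _
  set P := Nat.card {v : G.V // f v = true} with hP
  have key : ∀ j : ℕ,
      (∏ k ∈ Finset.range j, Perm.sign (G.pairPerm f (η k) (η ((k : ZMod m)+1)) (hf _) (hf _)))
        = Perm.sign (G.pairPerm f (η 0) (η (j : ZMod m)) (hf _) (hf _)) := by
    intro j
    induction j with
    | zero =>
      rw [Finset.prod_range_zero]
      have h0 : G.pairPerm f (η 0) (η ((0:ℕ) : ZMod m)) (hf _) (hf _) = Equiv.refl _ := by
        apply Equiv.ext; intro v
        refine Subtype.ext ?_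
        show G.inv (η ((0:ℕ) : ZMod m)) (G.inv (η 0) v.1) = v.1
        rw [Nat.cast_zero]
        exact G.invol _ _
      rw [h0]
      simp
    | succ j ih =>
      rw [Finset.prod_range_succ, ih, mul_comm, ← map_mul]
      congr 1
      apply Equiv.ext; intro v
      refine Subtype.ext ?_
      show G.inv (η ((j:ZMod m)+1)) (G.inv (η (j : ZMod m))
        (G.inv (η (j : ZMod m)) (G.inv (η 0) v.1))) =
        G.inv (η ((j+1 : ℕ) : ZMod m)) (G.inv (η 0) v.1)
      rw [G.invol, Nat.cast_add, Nat.cast_one]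
  have keym := key m
  rw [ZMod.natCast_self] at keym
  have hid : G.pairPerm f (η 0) (η (0 : ZMod m)) (hf _) (hf _) = Equiv.refl _ := by
    apply Equiv.ext; intro v
    exact Subtype.ext (G.invol _ _)
  rw [hid] at keym
  have hsigns : ∀ k : ℕ,
      Perm.sign (G.pairPerm f (η k) (η ((k : ZMod m)+1)) (hf _) (hf _)) =
        (-1 : ℤˣ) ^ (P + G.g {η (k : ZMod m), η ((k : ZMod m)+1)}) := fun k =>
    G.sign_pairPerm f _ _ (hf _) (hf _)
  have hprod :
      (-1 : ℤˣ) ^ (∑ k ∈ Finset.range m, (P + G.g {η (k : ZMod m), η ((k : ZMod m)+1)})) = 1 := by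
    rw [← Finset.prod_pow_eq_pow_sum]
    rw [show (∏ k ∈ Finset.range m, (-1:ℤˣ)^(P + G.g {η (k : ZMod m), η ((k : ZMod m)+1)}))
      = ∏ k ∈ Finset.range m,
          Perm.sign (G.pairPerm f (η k) (η ((k : ZMod m)+1)) (hf _) (hf _)) from
      (Finset.prod_congr rfl (fun k _ => (hsigns k).symm))]
    rw [keym]
    simp
  have heven : Even (∑ k ∈ Finset.range m, (P + G.g {η (k : ZMod m), η ((k : ZMod m)+1)})) := by
    have h2 := congrArg (Units.val) hprod
    simp only [Units.val_one, Units.val_pow_eq_pow_val, Units.val_neg] at h2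
    rw [← neg_one_pow_eq_one_iff_even (R := ℤ) (by norm_num)]
    exact h2
  rw [Finset.sum_add_distrib, Finset.sum_const, Finset.card_range, smul_eq_mul] at heven
  rw [sum_zmod_eq_range (fun k => G.g {η k, η (k+1)})]
  have : (∑ k ∈ Finset.range m, G.g {η ((k:ℕ) : ZMod m), η (((k:ℕ) : ZMod m)+1)}) + m * P
      = m * P + ∑ k ∈ Finset.range m, G.g {η ((k:ℕ) : ZMod m), η (((k:ℕ) : ZMod m)+1)} := by
    omega
  rw [this]
  exact heven

end CG
end PairPerm

section Residues
open Relation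
namespace CG
variable {n : ℕ}

lemma step_mono (G : CG n) {B C : Set (Fin n)} (h : B ⊆ C) {a b : G.V} :
    G.step B a b → G.step C a b := fun ⟨c, hc, hh⟩ => ⟨c, h hc, hh⟩

lemma eqvGen_mono (G : CG n) {B C : Set (Fin n)} (h : B ⊆ C) {a b : G.V} :
    EqvGen (G.step B) a b → EqvGen (G.step C) a b :=
  EqvGen.mono (r := G.step B) (p := G.step C) (fun a b hab => G.step_mono h hab) a b

lemma succAbove_image_subset (i : Fin (n+1)) (B' : Set (Fin n)) :
    i.succAbove '' B' ⊆ {j | j ≠ i} := by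
  rintro c ⟨k, -, rfl⟩
  exact Fin.succAbove_ne i k

variable (G : CG (n+1)) (i : Fin (n+1))

lemma stepHat (v : G.V) (B' : Set (Fin n)) (x y : (G.hatRes i v).V) :
    (G.hatRes i v).step B' x y ↔ G.step (i.succAbove '' B') x.1 y.1 := by
  constructor
  · rintro ⟨k, hk, rfl⟩
    exact ⟨i.succAbove k, ⟨k, hk, rfl⟩, rfl⟩
  · rintro ⟨c, ⟨k, hk, rfl⟩, hc⟩
    exact ⟨k, hk, Subtype.ext hc⟩

lemma eqvGen_hat_iff (v : G.V) (B' : Set (Fin n)) (x y : (G.hatRes i v).V) :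
    EqvGen ((G.hatRes i v).step B') x y ↔ EqvGen (G.step (i.succAbove '' B')) x.1 y.1 := by
  constructor
  · intro h
    induction h with
    | rel a b hab => exact EqvGen.rel _ _ ((G.stepHat i v B' a b).mp hab)
    | refl _ => exact EqvGen.refl _
    | symm _ _ _ ih => exact EqvGen.symm _ _ ih
    | trans _ _ _ _ _ ih1 ih2 => exact EqvGen.trans _ _ _ ih1 ih2
  · intro h
    have main : ∀ a b : G.V, EqvGen (G.step (i.succAbove '' B')) a b →
        ∀ (ha : EqvGen (G.step {j | j ≠ i}) v a) (hb : EqvGen (G.step {j | j ≠ i}) v b),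
          EqvGen ((G.hatRes i v).step B') ⟨a, ha⟩ ⟨b, hb⟩ := by
      intro a b h
      induction h with
      | rel a b hab =>
          intro ha hb
          exact EqvGen.rel _ _ ((G.stepHat i v B' ⟨a, ha⟩ ⟨b, hb⟩).mpr hab)
      | refl a =>
          intro ha hb
          have : (⟨a, ha⟩ : (G.hatRes i v).V) = ⟨a, hb⟩ := Subtype.ext rfl
          rw [this]
          exact EqvGen.refl _
      | symm a b _ ih =>
          intro ha hb
          exact EqvGen.symm _ _ (ih hb ha)
      | trans a b c hab _ ih1 ih2 =>
          intro ha hc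
          have hb : EqvGen (G.step {j | j ≠ i}) v b :=
            EqvGen.trans _ _ _ ha (G.eqvGen_mono (succAbove_image_subset i B') hab)
          exact EqvGen.trans _ _ _ (ih1 ha hb) (ih2 hb hc)
    exact main x.1 y.1 h x.2 y.2

noncomputable def compMap (B' : Set (Fin n)) :
    Quotient (EqvGen.setoid (G.step (i.succAbove '' B'))) → Quotient (G.resSetoid i) :=
  Quotient.lift (fun w => Quotient.mk (G.resSetoid i) w)
    (fun a b h => Quotient.sound (G.eqvGen_mono (succAbove_image_subset i B') h))

noncomputable instance resQuotFintype : Fintype (Quotient (G.resSetoid i)) :=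
  Fintype.ofFinite _

lemma hat_fiber_card (v : G.V) (B' : Set (Fin n)) :
    (G.hatRes i v).g B' =
      Nat.card {x : Quotient (EqvGen.setoid (G.step (i.succAbove '' B'))) //
        G.compMap i B' x = Quotient.mk (G.resSetoid i) v} := by
  apply Nat.card_congr
  refine Equiv.ofBijective
    (Quotient.lift (fun (x : (G.hatRes i v).V) =>
      (⟨Quotient.mk (EqvGen.setoid (G.step (i.succAbove '' B'))) x.1,
        (Quotient.sound x.2).symm⟩ :
        {x : Quotient (EqvGen.setoid (G.step (i.succAbove '' B'))) //
          G.compMap i B' x = Quotient.mk (G.resSetoid i) v}))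
      (fun x y hxy => Subtype.ext
        (Quotient.sound ((G.eqvGen_hat_iff i v B' x y).mp hxy)))) ⟨?_, ?_⟩
  · rintro ⟨x⟩ ⟨y⟩ hxy
    have hxy' : Quotient.mk (EqvGen.setoid (G.step (i.succAbove '' B'))) x.1 =
        Quotient.mk (EqvGen.setoid (G.step (i.succAbove '' B'))) y.1 :=
      congrArg Subtype.val hxy
    exact Quotient.sound ((G.eqvGen_hat_iff i v B' x y).mpr (Quotient.exact hxy'))
  · rintro ⟨q', hq'⟩
    have hmem : EqvGen (G.step {j | j ≠ i}) v q'.out := by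
      have h1 : G.compMap i B'
          (Quotient.mk (EqvGen.setoid (G.step (i.succAbove '' B'))) q'.out) =
          Quotient.mk (G.resSetoid i) v := by
        rw [Quotient.out_eq q']; exact hq'
      exact EqvGen.symm _ _ (Quotient.exact h1)
    refine ⟨Quotient.mk (EqvGen.setoid ((G.hatRes i v).step B')) ⟨q'.out, hmem⟩, ?_⟩
    exact Subtype.ext (Quotient.out_eq q')

lemma g_decomp (B' : Set (Fin n)) :
    G.g (i.succAbove '' B') = ∑ q : Quotient (G.resSetoid i), (G.hatRes i q.out).g B' := by
  rw [show G.g (i.succAbove '' B') =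
    Nat.card (Quotient (EqvGen.setoid (G.step (i.succAbove '' B')))) from rfl]
  rw [nat_card_eq_sum_fibers (G.compMap i B')]
  refine Finset.sum_congr rfl (fun q _ => ?_)
  conv_lhs => rw [← Quotient.out_eq q]
  exact (G.hat_fiber_card i q.out B').symm

lemma card_decomp :
    Nat.card G.V = ∑ q : Quotient (G.resSetoid i), Nat.card (G.hatRes i q.out).V := by
  rw [nat_card_eq_sum_fibers (Quotient.mk (G.resSetoid i))]
  refine Finset.sum_congr rfl (fun q _ => ?_)
  refine Nat.card_congr (Equiv.subtypeEquivRight ?_)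
  intro w
  show (Quotient.mk (G.resSetoid i) w = q) ↔ EqvGen (G.step {j | j ≠ i}) q.out w
  constructor
  · intro h
    exact Quotient.exact ((Quotient.out_eq q).trans h.symm)
  · intro h
    exact ((Quotient.sound h).symm).trans (Quotient.out_eq q)

end CG
end Residues

section EvenCard
open Relation
namespace CG
variable {n : ℕ}

lemma card_even (G : CG n) (hn : 0 < n) : ∃ t, Nat.card G.V = 2 * t := by
  classical
  set c0 : Fin n := ⟨0, hn⟩ with hc0
  set r := fun x y : G.V => G.inv c0 x = y with hr
  have hiff : ∀ x y : G.V, EqvGen r x y ↔ (y = x ∨ y = G.inv c0 x) := by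
    intro x y
    constructor
    · intro h
      induction h with
      | rel a b hab => exact Or.inr hab.symm
      | refl a => exact Or.inl rfl
      | symm a b _ ih =>
          rcases ih with rfl | rfl
          · exact Or.inl rfl
          · exact Or.inr (G.invol c0 a).symm
      | trans a b c _ _ ih1 ih2 =>
          rcases ih1 with h1 | h1 <;> rcases ih2 with h2 | h2
          · exact Or.inl (h2.trans h1)
          · exact Or.inr (h2.trans (congrArg (G.inv c0) h1))
          · exact Or.inr (h2.trans h1)
          · exact Or.inl (h2.trans (by rw [h1, G.invol]))
    · rintro (rfl | rfl)
      · exact EqvGen.refl _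
      · exact EqvGen.rel _ _ rfl
  letI : Fintype (Quotient (EqvGen.setoid r)) := Fintype.ofFinite _
  refine ⟨Nat.card (Quotient (EqvGen.setoid r)), ?_⟩
  rw [nat_card_eq_sum_fibers (Quotient.mk (EqvGen.setoid r))]
  have hfib : ∀ q : Quotient (EqvGen.setoid r),
      Nat.card {w : G.V // Quotient.mk (EqvGen.setoid r) w = q} = 2 := by
    intro q
    have he : {w : G.V // Quotient.mk (EqvGen.setoid r) w = q} ≃
        {w : G.V // w ∈ ({q.out, G.inv c0 q.out} : Finset G.V)} := by
      refine Equiv.subtypeEquivRight ?_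
      intro w
      rw [Finset.mem_insert, Finset.mem_singleton]
      constructor
      · intro h
        have h1 : EqvGen r q.out w := Quotient.exact ((Quotient.out_eq q).trans h.symm)
        exact (hiff q.out w).mp h1
      · intro h
        have h1 : EqvGen r q.out w := (hiff q.out w).mpr h
        exact ((Quotient.sound h1).symm).trans (Quotient.out_eq q)
    rw [Nat.card_congr he, Nat.card_eq_fintype_card, Fintype.card_coe,
      Finset.card_insert_of_notMem
        (by simp only [Finset.mem_singleton]; exact fun h => G.noFix c0 q.out h.symm),
      Finset.card_singleton]
  rw [Finset.sum_congr rfl (fun q _ => hfib q), Finset.sum_const, Finset.card_univ,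
    smul_eq_mul, Nat.card_eq_fintype_card, mul_comm]

end CG
end EvenCard

section ResParity
open Relation
namespace CG

lemma resParity {d : ℕ} [NeZero d] (Ξ : CG d) (ε' : ZMod d ≃ Fin d)
    (h : Ξ.Bipartite ∨ ∃ k : ℤ, Ξ.rho ε' = (k : ℚ)) :
    ∃ t, Nat.card Ξ.V = 2 * t ∧
      Even ((∑ k : ZMod d, Ξ.g {ε' k, ε' (k+1)}) + d * t) := by
  have hd : 0 < d := Nat.pos_of_ne_zero (NeZero.ne d)
  obtain ⟨t, ht⟩ := Ξ.card_even hd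
  refine ⟨t, ht, ?_⟩
  rcases h with ⟨f, hf⟩ | ⟨k, hk⟩
  · have htel := Ξ.tel d (fun k => ε' k) f (fun k v => hf (ε' k) v)
    have hcard := Ξ.card_eq_two_mul (f := f) (a := ε' 0) (hf _)
    have heq : t = Nat.card {v : Ξ.V // f v = true} := by omega
    rw [heq]
    exact htel
  · set S : ℕ := ∑ k : ZMod d, Ξ.g {ε' k, ε' (k+1)} with hS
    have hpq : Ξ.pQ = (t : ℚ) := by
      rw [pQ, ht]
      push_cast
      ring
    rw [rho, hpq] at hk
    have hsum : (∑ j : ZMod d, (Ξ.g {ε' j, ε' (j+1)} : ℚ)) = (S : ℚ) := by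
      rw [hS]
      push_cast
      rfl
    rw [hsum] at hk
    -- 1 - ((S + (1 - (d-1)) * t))/2 = k
    have hq : (S : ℚ) + (2 - (d:ℚ)) * t = 2 - 2 * k := by
      field_simp at hk
      linarith [hk]
    have hz : (S : ℤ) + (2 - (d:ℤ)) * t = 2 - 2 * k := by
      exact_mod_cast hq
    rw [sub_mul] at hz
    have : Even ((S : ℤ) + (d : ℤ) * t) := by
      rw [Int.even_iff]
      omega
    rw [show ((S : ℤ) + (d:ℤ) * t) = ((S + d * t : ℕ) : ℤ) by push_cast; ring] at this
    exact Int.even_coe_nat _ |>.mp this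

end CG
end ResParity

section EpsPrime
open Relation

lemma exists_eps' {d : ℕ} [NeZero d] (ε : ZMod (d+1) ≃ Fin (d+1)) (i : ZMod (d+1)) :
    ∃ ε' : ZMod d ≃ Fin d, ∀ j : ZMod d,
      (ε i).succAbove (ε' j) = ε (i + 1 + ((j.val : ℕ) : ZMod (d+1))) := by
  classical
  have hne : ∀ j : ZMod d, ε (i + 1 + ((j.val : ℕ) : ZMod (d+1))) ≠ ε i := by
    intro j h
    have h1 : i + 1 + ((j.val : ℕ) : ZMod (d+1)) = i := ε.injective h
    have h2 : ((1 + j.val : ℕ) : ZMod (d+1)) = 0 := by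
      push_cast
      have h3 : i + (1 + ((j.val : ℕ) : ZMod (d+1))) = i + 0 := by
        rw [add_zero, ← add_assoc]; exact h1
      exact add_left_cancel h3
    rw [ZMod.natCast_eq_zero_iff] at h2
    have hj := ZMod.val_lt j
    have := Nat.le_of_dvd (by omega) h2
    omega
  have hsome : ∀ j : ZMod d,
      (finSuccEquiv' (ε i) (ε (i + 1 + ((j.val : ℕ) : ZMod (d+1))))).isSome := by
    intro j
    rcases hopt : finSuccEquiv' (ε i) (ε (i + 1 + ((j.val : ℕ) : ZMod (d+1)))) with _ | y
    · exfalso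
      apply hne j
      have h5 := congrArg (finSuccEquiv' (ε i)).symm hopt
      rw [Equiv.symm_apply_apply, finSuccEquiv'_symm_none] at h5
      exact h5
    · rfl
  set F : ZMod d → Fin d := fun j =>
    (finSuccEquiv' (ε i) (ε (i + 1 + ((j.val : ℕ) : ZMod (d+1))))).get (hsome j) with hF
  have hprop : ∀ j, (ε i).succAbove (F j) = ε (i + 1 + ((j.val : ℕ) : ZMod (d+1))) := by
    intro j
    have h1 : finSuccEquiv' (ε i) (ε (i + 1 + ((j.val : ℕ) : ZMod (d+1)))) = some (F j) :=
      (Option.some_get (hsome j)).symm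
    have h5 := congrArg (finSuccEquiv' (ε i)).symm h1
    rw [Equiv.symm_apply_apply, finSuccEquiv'_symm_some] at h5
    exact h5.symm
  have hinj : Function.Injective F := by
    intro a b hab
    have h0 : ε (i + 1 + ((a.val : ℕ) : ZMod (d+1))) = ε (i + 1 + ((b.val : ℕ) : ZMod (d+1))) := by
      rw [← hprop a, ← hprop b, hab]
    have h1 := ε.injective h0
    have h2 : ((a.val : ℕ) : ZMod (d+1)) = ((b.val : ℕ) : ZMod (d+1)) := add_left_cancel h1
    have h3 : a.val = b.val := by
      have h4 := congrArg ZMod.val h2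
      rwa [ZMod.val_cast_of_lt (lt_trans (ZMod.val_lt a) (Nat.lt_succ_self d)),
        ZMod.val_cast_of_lt (lt_trans (ZMod.val_lt b) (Nat.lt_succ_self d))] at h4
    exact ZMod.val_injective d h3
  refine ⟨Equiv.ofBijective F
    ((Fintype.bijective_iff_injective_and_card F).mpr ⟨hinj, by simp [ZMod.card]⟩),
    fun j => hprop j⟩

end EpsPrime
/-- Chiavacci–Pareschi: if `Γ` is non-bipartite and, for some index `i`,
(a) every `{ε_{i-1}, ε_i, ε_{i+1}}`-residue is bipartite, and (b) every residue missing
the color `ε_i` is bipartite or non-bipartite with integer regular genus with respect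
to the permutation induced by `ε`, then `ρ_ε(Γ)` is an integer. -/
theorem rho_integer_criterion {d : ℕ} [NeZero d] (G : CG (d + 1)) (hG : G.Connected)
    (hnb : ¬ G.Bipartite) (ε : ZMod (d + 1) ≃ Fin (d + 1)) (i : ZMod (d + 1))
    (ha : ∀ v, G.ResidueBipartite {ε (i - 1), ε i, ε (i + 1)} v)
    (hb : ∀ v, (G.hatRes (ε i) v).Bipartite ∨
      (¬ (G.hatRes (ε i) v).Bipartite ∧
        ∀ ε' : ZMod d ≃ Fin d,
          (∀ j : ZMod d, (ε i).succAbove (ε' j) = ε (i + 1 + ((j.val : ℕ) : ZMod (d + 1)))) →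
          ∃ k : ℤ, (G.hatRes (ε i) v).rho ε' = (k : ℚ))) :
    ∃ k : ℤ, G.rho ε = (k : ℚ) := by
  classical
  obtain ⟨e, rfl⟩ : ∃ e, d = e + 1 :=
    ⟨d - 1, by have := Nat.pos_of_ne_zero (NeZero.ne d); omega⟩
  -- glue the 3-coloring bipartition
  obtain ⟨f3, hf3⟩ := G.glue ha
  set P := Nat.card {v : G.V // f3 v = true} with hPdef
  have hcardV : Nat.card G.V = 2 * P :=
    G.card_eq_two_mul (f := f3) (a := ε i)
      (fun v => hf3 v (ε i) (by right; left; rfl))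
  -- the three-color telescope
  set η3 : ZMod 3 → Fin (e+1+1) := fun k => ε (i - 1 + ((k.val : ℕ) : ZMod (e+1+1)))
    with hη3
  have hη3flip : ∀ (k : ZMod 3) (v : G.V), f3 (G.inv (η3 k) v) = ! f3 v := by
    intro k v
    refine hf3 v _ ?_
    show η3 k ∈ ({ε (i - 1), ε i, ε (i + 1)} : Set (Fin (e+1+1)))
    have hk : k.val = 0 ∨ k.val = 1 ∨ k.val = 2 := by have := ZMod.val_lt k; omega
    rcases hk with h | h | h <;> simp only [hη3, h]
    · have h1 : i - 1 + ((0:ℕ) : ZMod (e+1+1)) = i - 1 := by push_cast; ring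
      rw [h1]; left; rfl
    · have h1 : i - 1 + ((1:ℕ) : ZMod (e+1+1)) = i := by push_cast; ring
      rw [h1]; right; left; rfl
    · have h1 : i - 1 + ((2:ℕ) : ZMod (e+1+1)) = i + 1 := by push_cast; ring
      rw [h1]; right; right; rfl
  have htel3 := G.tel 3 η3 f3 hη3flip
  have h3sum : (∑ k : ZMod 3, G.g {η3 k, η3 (k+1)}) =
      G.g {ε (i-1), ε i} + G.g {ε i, ε (i+1)} + G.g {ε (i+1), ε (i-1)} := by
    have hv0 : (((0:ℕ) : ZMod 3)).val = 0 := by decide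
    have hv01 : ((((0:ℕ) : ZMod 3)) + 1).val = 1 := by decide
    have hv1 : (((1:ℕ) : ZMod 3)).val = 1 := by decide
    have hv11 : ((((1:ℕ) : ZMod 3)) + 1).val = 2 := by decide
    have hv2 : (((2:ℕ) : ZMod 3)).val = 2 := by decide
    have hv21 : ((((2:ℕ) : ZMod 3)) + 1).val = 0 := by decide
    have ha0 : i - 1 + ((0:ℕ) : ZMod (e+1+1)) = i - 1 := by push_cast; ring
    have ha1 : i - 1 + ((1:ℕ) : ZMod (e+1+1)) = i := by push_cast; ring
    have ha2 : i - 1 + ((2:ℕ) : ZMod (e+1+1)) = i + 1 := by push_cast; ring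
    rw [CG.sum_zmod_eq_range, Finset.sum_range_succ, Finset.sum_range_succ,
      Finset.sum_range_one]
    simp only [hη3, hv0, hv01, hv1, hv11, hv2, hv21, ha0, ha1, ha2]
  rw [h3sum, Set.pair_comm (ε (i+1)) (ε (i-1))] at htel3
  -- main sum reindexing
  set Fj : ZMod (e+1+1) → ℕ := fun j => G.g {ε j, ε (j+1)} with hFj
  have hshift : (∑ j : ZMod (e+1+1), Fj j) = ∑ t : ZMod (e+1+1), Fj (i + 1 + t) :=
    (Fintype.sum_bijective _ (Equiv.addLeft (i+1)).bijective
      (fun t => Fj (i + 1 + t)) Fj (fun t => rfl)).symm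
  have h00 : (((e+1+1 : ℕ)) : ZMod (e+1+1)) = 0 := by
    exact_mod_cast ZMod.natCast_self (e+1+1)
  have hcast_e : ((e : ℕ) : ZMod (e+1+1)) = -2 := by
    push_cast at h00
    linear_combination h00
  have hcast_e1 : (((e+1 : ℕ)) : ZMod (e+1+1)) = -1 := by
    push_cast at h00 ⊢
    linear_combination h00
  have h1 : i + 1 + (((e+1:ℕ)) : ZMod (e+1+1)) = i := by rw [hcast_e1]; ring
  have h2 : i + 1 + (((e:ℕ)) : ZMod (e+1+1)) = i - 1 := by rw [hcast_e]; ring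
  have hmain : (∑ j : ZMod (e+1+1), Fj j) =
      (∑ t ∈ Finset.range e, Fj (i + 1 + ((t:ℕ) : ZMod (e+1+1))))
        + G.g {ε (i-1), ε i} + G.g {ε i, ε (i+1)} := by
    rw [hshift, CG.sum_zmod_eq_range, Finset.sum_range_succ, Finset.sum_range_succ]
    rw [h1, h2]
    have h3 : Fj (i - 1) = G.g {ε (i-1), ε i} := by
      show G.g {ε (i-1), ε (i-1+1)} = _
      rw [sub_add_cancel]
    have h4 : Fj i = G.g {ε i, ε (i+1)} := rfl
    rw [h3, h4]
  -- hat residues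
  obtain ⟨ε', hε'⟩ := exists_eps' (d := e+1) ε i
  have hres : ∀ q : Quotient (G.resSetoid (ε i)), ∃ t,
      Nat.card (G.hatRes (ε i) q.out).V = 2 * t ∧
      Even ((∑ k : ZMod (e+1), (G.hatRes (ε i) q.out).g {ε' k, ε' (k+1)}) + (e+1) * t) := by
    intro q
    refine CG.resParity _ ε' ?_
    rcases hb q.out with h | ⟨-, h⟩
    · exact Or.inl h
    · exact Or.inr (h ε' hε')
  choose tq htq1 htq2 using hres
  set T : ℕ := ∑ q : Quotient (G.resSetoid (ε i)), tq q with hT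
  have hcard2 : Nat.card G.V = 2 * T := by
    rw [G.card_decomp (ε i), hT, Finset.mul_sum]
    exact Finset.sum_congr rfl (fun q _ => htq1 q)
  have heven2 : Even (∑ q : Quotient (G.resSetoid (ε i)),
      ((∑ k : ZMod (e+1), (G.hatRes (ε i) q.out).g {ε' k, ε' (k+1)}) + (e+1) * tq q)) := by
    rw [even_iff_two_dvd]
    exact Finset.dvd_sum (fun q _ => (even_iff_two_dvd).mp (htq2 q))
  rw [Finset.sum_add_distrib, ← Finset.mul_sum, ← hT] at heven2
  have hswap : (∑ q : Quotient (G.resSetoid (ε i)),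
      (∑ k : ZMod (e+1), (G.hatRes (ε i) q.out).g {ε' k, ε' (k+1)}))
      = ∑ k : ZMod (e+1), G.g ((ε i).succAbove '' {ε' k, ε' (k+1)}) := by
    rw [Finset.sum_comm]
    exact Finset.sum_congr rfl (fun k _ => (G.g_decomp (ε i) {ε' k, ε' (k+1)}).symm)
  rw [hswap] at heven2
  have himg : ∀ k : ZMod (e+1), (ε i).succAbove '' ({ε' k, ε' (k+1)} : Set (Fin (e+1))) =
      {ε (i + 1 + ((k.val:ℕ) : ZMod (e+1+1))), ε (i + 1 + (((k+1).val:ℕ) : ZMod (e+1+1)))} := by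
    intro k
    rw [Set.image_pair, hε', hε']
  have hhat2 : (∑ k : ZMod (e+1), G.g ((ε i).succAbove '' {ε' k, ε' (k+1)}))
      = (∑ t ∈ Finset.range e, Fj (i + 1 + ((t:ℕ) : ZMod (e+1+1))))
        + G.g {ε (i-1), ε (i+1)} := by
    rw [Finset.sum_congr rfl (fun k _ => congrArg G.g (himg k))]
    rw [CG.sum_zmod_eq_range, Finset.sum_range_succ]
    have hterm : ∀ t ∈ Finset.range e,
        G.g {ε (i + 1 + ((((t:ℕ) : ZMod (e+1)).val:ℕ) : ZMod (e+1+1))),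
             ε (i + 1 + (((((t:ℕ) : ZMod (e+1)) + 1).val:ℕ) : ZMod (e+1+1)))}
          = Fj (i + 1 + ((t:ℕ) : ZMod (e+1+1))) := by
      intro t ht
      have htlt := Finset.mem_range.mp ht
      have h5 : (((t:ℕ) : ZMod (e+1))).val = t := ZMod.val_cast_of_lt (by omega)
      have h6 : ((((t:ℕ) : ZMod (e+1)) + 1)).val = t+1 := by
        have h7 : (((t:ℕ) : ZMod (e+1)) + 1) = (((t+1 : ℕ)) : ZMod (e+1)) := by
          push_cast; ring
        rw [h7, ZMod.val_cast_of_lt (by omega)]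
      rw [h5, h6]
      have h7 : i + 1 + (((t+1:ℕ)) : ZMod (e+1+1)) = (i + 1 + ((t:ℕ) : ZMod (e+1+1))) + 1 := by
        push_cast; ring
      rw [h7]
    rw [Finset.sum_congr rfl hterm]
    -- last term: k = cast e in ZMod (e+1)
    have h8 : (((e:ℕ) : ZMod (e+1))).val = e := ZMod.val_cast_of_lt (by omega)
    have h9 : ((((e:ℕ) : ZMod (e+1)) + 1)).val = 0 := by
      have h10 : (((e:ℕ) : ZMod (e+1)) + 1) = 0 := by
        have := ZMod.natCast_self (e+1)
        push_cast at this
        linear_combination this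
      rw [h10, ZMod.val_zero]
    rw [h8, h9, h2]
    have h11 : i + 1 + ((0:ℕ) : ZMod (e+1+1)) = i + 1 := by push_cast; ring
    rw [h11]
  rw [hhat2] at heven2
  -- final parity bookkeeping
  have hPT : P = T := by omega
  have huw : e * P = e * T := by rw [hPT]
  rw [add_mul, one_mul] at heven2
  have hfinal : Even ((∑ j : ZMod (e+1+1), Fj j) + e * P) := by
    rw [hmain]
    rw [Nat.even_iff] at htel3 heven2 ⊢
    omega
  obtain ⟨s, hs⟩ := hfinal
  refine ⟨1 - (s : ℤ) + e * P, ?_⟩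
  have hpQ : G.pQ = (P : ℚ) := by
    rw [CG.pQ, hcardV]; push_cast; ring
  have hcast : (∑ j : ZMod (e+1+1), (G.g {ε j, ε (j+1)} : ℚ))
      = ((∑ j : ZMod (e+1+1), Fj j : ℕ) : ℚ) := by
    rw [Nat.cast_sum]
  have hs' : ((∑ j : ZMod (e+1+1), Fj j : ℕ) : ℚ) + (e : ℚ) * P = (s : ℚ) + s := by
    exact_mod_cast congrArg (fun m : ℕ => (m : ℚ)) hs
  rw [CG.rho, hpQ, hcast]
  push_cast
  push_cast at hs'
  linarith
end
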